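/- arXiv:1108.0344 — 6 statements merged into one kernel-verified Lean document; each statement's English description precedes it below -/
import Mathlib

section
/- For every δ > 1 there is a constant C(δ) > 0 such that: if r, g : 2ℤ → [0,∞) satisfy Σ_{k∈2ℤ} r(k)² < ∞ and |g|_δ² := Σ_{k∈2ℤ} g(k)²·(log(|k|+e))^δ < ∞, then for every even N ∈ 2ℕ one has σ₁(N) ≤ C(δ)·‖r‖·|g|_δ and σ₂(N) ≤ C(δ)·‖r‖·|g|_δ. -/
open scoped BigOperators

/-- `σ₁(N) = Σ_{k∈2ℤ, |k|≤N} Σ_{j∈2ℤ, |j|>N} r(j+k)·g(k)/|j−k|`. -/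
noncomputable def sigma1 (r g : ℤ → ℝ) (N : ℤ) : ℝ :=
  ∑' p : ℤ × ℤ, if Even p.1 ∧ Even p.2 ∧ |p.1| ≤ N ∧ N < |p.2|
    then r (p.2 + p.1) * g p.1 / (|p.2 - p.1| : ℤ) else 0

/-- `σ₂(N) = Σ_{k∈2ℤ, |k|>N} Σ_{j∈2ℤ, |j|≤N} r(j+k)·g(k)/|k−j|`. -/
noncomputable def sigma2 (r g : ℤ → ℝ) (N : ℤ) : ℝ :=
  ∑' p : ℤ × ℤ, if Even p.1 ∧ Even p.2 ∧ N < |p.1| ∧ |p.2| ≤ N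
    then r (p.2 + p.1) * g p.1 / (|p.1 - p.2| : ℤ) else 0

/-- `‖x‖ = (Σ_{k∈2ℤ} x(k)²)^{1/2}`. -/
noncomputable def evenL2Norm (x : ℤ → ℝ) : ℝ :=
  Real.sqrt (∑' k : ℤ, if Even k then x k ^ 2 else 0)

/-- `|x|_δ = (Σ_{k∈2ℤ} x(k)²(log(|k|+e))^δ)^{1/2}`. -/
noncomputable def evenLogNorm (x : ℤ → ℝ) (δ : ℝ) : ℝ :=
  Real.sqrt (∑' k : ℤ, if Even k then x k ^ 2 * Real.log (|k| + Real.exp 1) ^ δ else 0)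

section Stmt7Aux
open Finset
lemma one_le_logE {x : ℝ} (hx : 0 ≤ x) : 1 ≤ Real.log (x + Real.exp 1) := by
  have : Real.log (Real.exp 1) ≤ Real.log (x + Real.exp 1) :=
    Real.log_le_log (Real.exp_pos 1) (by linarith)
  simpa [Real.log_exp] using this

lemma core_log {δ : ℝ} (hδ : 0 < δ) {x y : ℝ} (hx : 0 ≤ x) (hy0 : 0 ≤ y) (hy : y ≤ x + 2) :
    Real.log (y + Real.exp 1) ^ δ ≤ 2 ^ δ * Real.log (x + Real.exp 1) ^ δ := by
  have he : (2.7182818283 : ℝ) < Real.exp 1 := Real.exp_one_gt_d9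
  have h1 : y + Real.exp 1 ≤ (x + Real.exp 1) ^ 2 := by nlinarith
  have h2 : Real.log (y + Real.exp 1) ≤ 2 * Real.log (x + Real.exp 1) := by
    calc Real.log (y + Real.exp 1) ≤ Real.log ((x + Real.exp 1) ^ 2) :=
          Real.log_le_log (by positivity) h1
      _ = 2 * Real.log (x + Real.exp 1) := by
          rw [Real.log_pow]; norm_num
  calc Real.log (y + Real.exp 1) ^ δ ≤ (2 * Real.log (x + Real.exp 1)) ^ δ :=
        Real.rpow_le_rpow (by linarith [one_le_logE hy0]) h2 hδ.le
    _ = 2 ^ δ * Real.log (x + Real.exp 1) ^ δ :=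
        Real.mul_rpow (by norm_num) (by linarith [one_le_logE hx])

lemma invsq {a : ℤ} (ha : 2 ≤ a) (D : Finset ℤ) (hD : ∀ m ∈ D, a ≤ m) :
    ∑ m ∈ D, (((m:ℝ))^2)⁻¹ ≤ 2 / (a:ℝ) := by
  have hinj : ∀ m ∈ D, ∀ m' ∈ D, m.toNat = m'.toNat → m = m' := by
    intro m hm m' hm' h
    have := hD m hm; have := hD m' hm'; omega
  have heq : ∑ m ∈ D, (((m:ℝ))^2)⁻¹ = ∑ n ∈ D.image Int.toNat, (((n:ℝ))^2)⁻¹ := by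
    rw [Finset.sum_image hinj]
    apply Finset.sum_congr rfl
    intro m hm
    have := hD m hm
    have hm0 : ((m.toNat : ℝ)) = (m : ℝ) := by
      exact_mod_cast congrArg (fun z : ℤ => (z : ℝ)) (Int.toNat_of_nonneg (by omega : (0:ℤ) ≤ m))
    rw [hm0]
  rw [heq]
  set T := (D.image Int.toNat).sup id + 1 with hT
  have hsub : D.image Int.toNat ⊆ Finset.Ioo (a.toNat - 1) T := by
    intro n hn
    obtain ⟨m, hm, rfl⟩ := mem_image.1 hn
    have h1 := hD m hm
    have h2 : m.toNat ≤ (D.image Int.toNat).sup id := Finset.le_sup (f := id) (mem_image_of_mem _ hm)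
    simp only [Finset.mem_Ioo]
    constructor
    · omega
    · omega
  calc ∑ n ∈ D.image Int.toNat, (((n:ℝ))^2)⁻¹
      ≤ ∑ n ∈ Finset.Ioo (a.toNat - 1) T, (((n:ℝ))^2)⁻¹ :=
        Finset.sum_le_sum_of_subset_of_nonneg hsub (fun i _ _ => by positivity)
    _ ≤ 2 / ((a.toNat - 1 : ℕ) + 1 : ℝ) := by
        have := sum_Ioo_inv_sq_le (α := ℝ) (a.toNat - 1) T
        simpa using this
    _ = 2 / (a:ℝ) := by
        congr 1
        have h3 : a.toNat - 1 + 1 = a.toNat := by omega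
        have : (((a.toNat - 1 : ℕ) : ℝ) + 1) = ((a.toNat : ℕ) : ℝ) := by exact_mod_cast congrArg (Nat.cast (R:=ℝ)) h3
        rw [this]
        exact_mod_cast congrArg (fun z : ℤ => (z : ℝ)) (Int.toNat_of_nonneg (by omega : (0:ℤ) ≤ a))

lemma bertrand {δ : ℝ} (hδ : 1 < δ) : ∃ K : ℝ, 1 ≤ K ∧ ∀ D : Finset ℤ, (∀ m ∈ D, (2:ℤ) ≤ m) →
    ∑ m ∈ D, ((m : ℝ) * Real.log ((m : ℝ) + Real.exp 1) ^ δ)⁻¹ ≤ K := by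
  have hl2 : 0 < Real.log 2 := Real.log_pos (by norm_num)
  have hsum : Summable (fun t : ℕ => (((t:ℝ) * Real.log 2) ^ δ)⁻¹) := by
    have h : ∀ t : ℕ, (((t:ℝ) * Real.log 2) ^ δ)⁻¹ = ((Real.log 2 ^ δ)⁻¹) * (((t:ℝ) ^ δ)⁻¹) := by
      intro t
      rw [Real.mul_rpow (Nat.cast_nonneg t) hl2.le, mul_inv, mul_comm]
    simpa [h] using (Real.summable_nat_rpow_inv.2 hδ).mul_left ((Real.log 2 ^ δ)⁻¹)
  have htn : ∀ t : ℕ, 0 ≤ (((t:ℝ) * Real.log 2) ^ δ)⁻¹ := fun t => by positivity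
  refine ⟨(∑' t : ℕ, (((t:ℝ) * Real.log 2) ^ δ)⁻¹) + 1, ?_, ?_⟩
  · have := tsum_nonneg (L := SummationFilter.unconditional ℕ) htn; linarith
  intro D hD
  set f : ℤ → ℝ := fun m => ((m : ℝ) * Real.log ((m : ℝ) + Real.exp 1) ^ δ)⁻¹ with hf
  set c : ℤ → ℕ := fun m => Nat.log 2 m.toNat with hc
  have hmaps : ∀ m ∈ D, c m ∈ D.image c := fun m hm => mem_image_of_mem c hm
  rw [← Finset.sum_fiberwise_of_maps_to hmaps f]
  have hfiber : ∀ t ∈ D.image c, ∑ m ∈ D.filter (fun m => c m = t), f m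
      ≤ (((t:ℝ) * Real.log 2) ^ δ)⁻¹ := by
    intro t ht
    obtain ⟨m₀, hm₀D, hm₀⟩ := mem_image.1 ht
    have hm₀2 : (2:ℤ) ≤ m₀ := hD m₀ hm₀D
    have ht1 : 1 ≤ t := by
      rw [← hm₀]
      exact Nat.log_pos (by norm_num) (by omega)
    have htpos : (0:ℝ) < (t:ℝ) * Real.log 2 := by
      have : (1:ℝ) ≤ (t:ℝ) := by exact_mod_cast ht1
      nlinarith
    have hterm : ∀ m ∈ D.filter (fun m => c m = t),
        f m ≤ ((2^t : ℝ) * ((t:ℝ) * Real.log 2) ^ δ)⁻¹ := by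
      intro m hm
      obtain ⟨hmD, hmc⟩ := mem_filter.1 hm
      have hm2 : (2:ℤ) ≤ m := hD m hmD
      have h2tn : (2:ℕ)^t ≤ m.toNat := by
        rw [← hmc]; exact Nat.pow_log_le_self 2 (by omega)
      have h2t : (2:ℤ)^t ≤ m := by
        have h4 : ((2:ℕ)^t : ℤ) ≤ (m.toNat : ℤ) := by exact_mod_cast h2tn
        rw [Int.toNat_of_nonneg (by omega : (0:ℤ) ≤ m)] at h4
        exact_mod_cast h4
      have hmr : (2^t : ℝ) ≤ (m:ℝ) := by exact_mod_cast h2t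
      have hlog : ((t:ℝ) * Real.log 2) ≤ Real.log ((m:ℝ) + Real.exp 1) := by
        have h1 : ((2:ℝ)^t) ≤ (m:ℝ) + Real.exp 1 := by linarith [Real.exp_pos 1]
        calc (t:ℝ) * Real.log 2 = Real.log ((2:ℝ)^t) := by rw [Real.log_pow]
          _ ≤ _ := Real.log_le_log (by positivity) h1
      have hb : (0:ℝ) < (2^t : ℝ) * ((t:ℝ) * Real.log 2) ^ δ := by positivity
      rw [hf]
      apply inv_anti₀ hb
      have hrp : ((t:ℝ) * Real.log 2) ^ δ ≤ Real.log ((m:ℝ) + Real.exp 1) ^ δ :=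
        Real.rpow_le_rpow (by positivity) hlog (by linarith)
      exact mul_le_mul hmr hrp (by positivity) (le_trans (by positivity) hmr)
    have hsub : D.filter (fun m => c m = t) ⊆ Finset.Ico ((2:ℤ)^t) (2^(t+1)) := by
      intro m hm
      obtain ⟨hmD, hmc⟩ := mem_filter.1 hm
      have hm2 : (2:ℤ) ≤ m := hD m hmD
      have h2tn : (2:ℕ)^t ≤ m.toNat := by
        rw [← hmc]; exact Nat.pow_log_le_self 2 (by omega)
      have h2tn' : m.toNat < (2:ℕ)^(t+1) := by
        rw [← hmc]; exact Nat.lt_pow_succ_log_self (by norm_num) m.toNat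
      simp only [Finset.mem_Ico]
      constructor
      · have h4 : ((2:ℕ)^t : ℤ) ≤ (m.toNat : ℤ) := by exact_mod_cast h2tn
        rw [Int.toNat_of_nonneg (by omega : (0:ℤ) ≤ m)] at h4
        exact_mod_cast h4
      · have h4 : (m.toNat : ℤ) < ((2:ℕ)^(t+1) : ℤ) := by exact_mod_cast h2tn'
        rw [Int.toNat_of_nonneg (by omega : (0:ℤ) ≤ m)] at h4
        exact_mod_cast h4
    have hicocard : (Finset.Ico ((2:ℤ)^t) (2^(t+1))).card = 2^t := by
      rw [Int.card_Ico]
      have h5 : (2:ℤ)^(t+1) - 2^t = (((2:ℕ)^t : ℕ) : ℤ) := by push_cast [pow_succ]; ring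
      rw [h5, Int.toNat_natCast]
    have hcard : ((D.filter (fun m => c m = t)).card : ℝ) ≤ (2^t : ℝ) := by
      have h6 := Finset.card_le_card hsub
      rw [hicocard] at h6
      exact_mod_cast h6
    calc ∑ m ∈ D.filter (fun m => c m = t), f m
        ≤ ∑ _m ∈ D.filter (fun m => c m = t), ((2^t : ℝ) * ((t:ℝ) * Real.log 2) ^ δ)⁻¹ :=
          Finset.sum_le_sum hterm
      _ = (D.filter (fun m => c m = t)).card * ((2^t : ℝ) * ((t:ℝ) * Real.log 2) ^ δ)⁻¹ := by
          rw [Finset.sum_const, nsmul_eq_mul]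
      _ ≤ (2^t : ℝ) * ((2^t : ℝ) * ((t:ℝ) * Real.log 2) ^ δ)⁻¹ :=
          mul_le_mul_of_nonneg_right hcard (by positivity)
      _ = (((t:ℝ) * Real.log 2) ^ δ)⁻¹ := by
          rw [mul_inv, ← mul_assoc, mul_inv_cancel₀ (by positivity), one_mul]
  refine le_trans (Finset.sum_le_sum hfiber)
    (le_trans (Summable.sum_le_tsum _ (fun t _ => htn t) hsum) (by linarith))



lemma even_gt {N j : ℤ} (hN : Even N) (hj : Even j) (h : N < j) : N + 2 ≤ j := by
  obtain ⟨x, rfl⟩ := hj; obtain ⟨y, rfl⟩ := hN; omega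

lemma even_abs' {k : ℤ} (hk : Even k) : Even |k| := by
  rcases abs_choice k with h | h <;> rw [h]
  · exact hk
  · exact hk.neg

lemma sum_sq_le (r : ℤ → ℝ) (hr : Summable fun k : ℤ => if Even k then r k ^ 2 else 0)
    (T : Finset ℤ) (hT : ∀ m ∈ T, Even m) : ∑ m ∈ T, r m ^ 2 ≤ evenL2Norm r ^ 2 := by
  have h0 : ∀ k : ℤ, 0 ≤ (if Even k then r k ^ 2 else 0) := fun k => by
    split <;> positivity
  have h1 : evenL2Norm r ^ 2 = ∑' k : ℤ, if Even k then r k ^ 2 else 0 :=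
    Real.sq_sqrt (tsum_nonneg h0)
  rw [h1]
  calc ∑ m ∈ T, r m ^ 2 = ∑ m ∈ T, (if Even m then r m ^ 2 else 0) :=
      Finset.sum_congr rfl (fun m hm => by rw [if_pos (hT m hm)])
    _ ≤ _ := Summable.sum_le_tsum T (fun k _ => h0 k) hr

lemma inner1 (r g : ℤ → ℝ) (hg : ∀ k, 0 ≤ g k)
    (hr : Summable fun k : ℤ => if Even k then r k ^ 2 else 0)
    {N k : ℤ} (hN : Even N) (hk : Even k) (hkN : |k| ≤ N) (Q : Finset ℤ) :
    ∑ j ∈ Q, (if Even k ∧ Even j ∧ |k| ≤ N ∧ N < |j|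
        then r (j + k) * g k / ((|j - k| : ℤ) : ℝ) else 0)
      ≤ g k * (evenL2Norm r * (2 * Real.sqrt ((((N + 2 - |k| : ℤ)) : ℝ))⁻¹)) := by
  set a : ℤ := N + 2 - |k| with ha
  have ha2 : (2:ℤ) ≤ a := by omega
  have haR : (0:ℝ) < (a:ℝ) := by exact_mod_cast (by omega : (0:ℤ) < a)
  set Q' := Q.filter (fun j => Even j ∧ N < |j|) with hQ'
  have hstep1 : ∑ j ∈ Q, (if Even k ∧ Even j ∧ |k| ≤ N ∧ N < |j|
        then r (j + k) * g k / ((|j - k| : ℤ) : ℝ) else 0)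
      = ∑ j ∈ Q', g k * (r (j + k) * (((|j - k| : ℤ) : ℝ))⁻¹) := by
    rw [hQ', Finset.sum_filter]
    apply Finset.sum_congr rfl
    intro j _
    by_cases h : Even j ∧ N < |j|
    · rw [if_pos h, if_pos ⟨hk, h.1, hkN, h.2⟩, div_eq_mul_inv]; ring
    · rw [if_neg h, if_neg (by tauto)]
  rw [hstep1, ← Finset.mul_sum]
  have hQ'mem : ∀ j ∈ Q', Even j ∧ N < |j| := fun j hj => (Finset.mem_filter.1 hj).2
  have hCS : ∑ j ∈ Q', r (j + k) * (((|j - k| : ℤ) : ℝ))⁻¹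
      ≤ Real.sqrt (∑ j ∈ Q', r (j + k) ^ 2)
        * Real.sqrt (∑ j ∈ Q', ((((|j - k| : ℤ) : ℝ))⁻¹) ^ 2) :=
    Real.sum_mul_le_sqrt_mul_sqrt _ _ _
  have hb1 : Real.sqrt (∑ j ∈ Q', r (j + k) ^ 2) ≤ evenL2Norm r := by
    have he : ∑ j ∈ Q', r (j + k) ^ 2 = ∑ m ∈ Q'.image (fun j => j + k), r m ^ 2 := by
      rw [Finset.sum_image (fun x _ y _ h => by omega)]
    have hle : ∑ j ∈ Q', r (j + k) ^ 2 ≤ evenL2Norm r ^ 2 := by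
      rw [he]
      apply sum_sq_le r hr
      intro m hm
      obtain ⟨j, hj, rfl⟩ := Finset.mem_image.1 hm
      exact (hQ'mem j hj).1.add hk
    calc Real.sqrt (∑ j ∈ Q', r (j + k) ^ 2) ≤ Real.sqrt (evenL2Norm r ^ 2) :=
        Real.sqrt_le_sqrt hle
      _ = evenL2Norm r := Real.sqrt_sq (Real.sqrt_nonneg _)
  have hb2 : Real.sqrt (∑ j ∈ Q', ((((|j - k| : ℤ) : ℝ))⁻¹) ^ 2)
      ≤ 2 * Real.sqrt ((a:ℝ))⁻¹ := by
    have hterm : ∀ j : ℤ, ((((|j - k| : ℤ) : ℝ))⁻¹) ^ 2 = (((j - k : ℤ) : ℝ) ^ 2)⁻¹ := by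
      intro j
      rw [inv_pow]
      congr 1
      push_cast
      rw [sq_abs]
    have hsplit : ∑ j ∈ Q', ((((|j - k| : ℤ) : ℝ))⁻¹) ^ 2
        = ∑ j ∈ Q'.filter (fun j => 0 < j), (((j - k : ℤ) : ℝ) ^ 2)⁻¹
          + ∑ j ∈ Q'.filter (fun j => ¬ 0 < j), (((j - k : ℤ) : ℝ) ^ 2)⁻¹ := by
      rw [← Finset.sum_filter_add_sum_filter_not Q' (fun j => 0 < j)]
      congr 1 <;> exact Finset.sum_congr rfl (fun j _ => hterm j)
    have hpos : ∑ j ∈ Q'.filter (fun j => 0 < j), (((j - k : ℤ) : ℝ) ^ 2)⁻¹ ≤ 2 / (a:ℝ) := by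
      have himg : ∑ j ∈ Q'.filter (fun j => 0 < j), (((j - k : ℤ) : ℝ) ^ 2)⁻¹
          = ∑ m ∈ (Q'.filter (fun j => 0 < j)).image (fun j => j - k), (((m : ℤ) : ℝ) ^ 2)⁻¹ := by
        rw [Finset.sum_image (fun x _ y _ h => by omega)]
      rw [himg]
      apply invsq ha2
      intro m hm
      obtain ⟨j, hj, rfl⟩ := Finset.mem_image.1 hm
      obtain ⟨hjQ', hj0⟩ := Finset.mem_filter.1 hj
      obtain ⟨hje, hjN⟩ := hQ'mem j hjQ'
      rw [abs_of_pos hj0] at hjN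
      have h2 : N + 2 ≤ j := even_gt hN hje hjN
      have h3 : k ≤ |k| := le_abs_self k
      linarith [ha]
    have hneg : ∑ j ∈ Q'.filter (fun j => ¬ 0 < j), (((j - k : ℤ) : ℝ) ^ 2)⁻¹ ≤ 2 / (a:ℝ) := by
      have hflip : ∀ j : ℤ, (((j - k : ℤ) : ℝ) ^ 2)⁻¹ = (((k - j : ℤ) : ℝ) ^ 2)⁻¹ := by
        intro j; congr 1; push_cast; ring
      have himg : ∑ j ∈ Q'.filter (fun j => ¬ 0 < j), (((j - k : ℤ) : ℝ) ^ 2)⁻¹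
          = ∑ m ∈ (Q'.filter (fun j => ¬ 0 < j)).image (fun j => k - j), (((m : ℤ) : ℝ) ^ 2)⁻¹ := by
        rw [Finset.sum_image (fun x _ y _ h => by omega)]
        exact Finset.sum_congr rfl (fun j _ => hflip j)
      rw [himg]
      apply invsq ha2
      intro m hm
      obtain ⟨j, hj, rfl⟩ := Finset.mem_image.1 hm
      obtain ⟨hjQ', hj0⟩ := Finset.mem_filter.1 hj
      obtain ⟨hje, hjN⟩ := hQ'mem j hjQ'
      have hj0' : j ≤ 0 := by omega
      rw [abs_of_nonpos hj0'] at hjN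
      have h2 : N + 2 ≤ -j := even_gt hN hje.neg hjN
      have h3 : -|k| ≤ k := neg_abs_le k
      linarith [ha]
    have hsum4 : ∑ j ∈ Q', ((((|j - k| : ℤ) : ℝ))⁻¹) ^ 2 ≤ 4 / (a:ℝ) := by
      rw [hsplit]
      have : (4:ℝ) / (a:ℝ) = 2 / (a:ℝ) + 2 / (a:ℝ) := by ring
      linarith
    calc Real.sqrt (∑ j ∈ Q', ((((|j - k| : ℤ) : ℝ))⁻¹) ^ 2)
        ≤ Real.sqrt (4 / (a:ℝ)) := Real.sqrt_le_sqrt hsum4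
      _ = 2 * Real.sqrt ((a:ℝ))⁻¹ := by
          rw [div_eq_mul_inv, Real.sqrt_mul (by norm_num : (0:ℝ) ≤ 4),
            show (4:ℝ) = 2 ^ 2 by norm_num, Real.sqrt_sq (by norm_num : (0:ℝ) ≤ 2)]
  have hfinal : ∑ j ∈ Q', r (j + k) * (((|j - k| : ℤ) : ℝ))⁻¹
      ≤ evenL2Norm r * (2 * Real.sqrt ((a:ℝ))⁻¹) :=
    le_trans hCS (mul_le_mul hb1 hb2 (Real.sqrt_nonneg _) (Real.sqrt_nonneg _))
  exact mul_le_mul_of_nonneg_left hfinal (hg k)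

lemma inner2 (r g : ℤ → ℝ) (hg : ∀ k, 0 ≤ g k)
    (hr : Summable fun k : ℤ => if Even k then r k ^ 2 else 0)
    {N k : ℤ} (hN : Even N) (hN0 : 0 ≤ N) (hk : Even k) (hkN : N < |k|) (Q : Finset ℤ) :
    ∑ j ∈ Q, (if Even k ∧ Even j ∧ N < |k| ∧ |j| ≤ N
        then r (j + k) * g k / ((|k - j| : ℤ) : ℝ) else 0)
      ≤ g k * (evenL2Norm r * (2 * Real.sqrt ((((|k| - N : ℤ)) : ℝ))⁻¹)) := by
  set a : ℤ := |k| - N with ha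
  have ha2 : (2:ℤ) ≤ a := by
    have := even_gt hN (even_abs' hk) hkN
    omega
  have haR : (0:ℝ) < (a:ℝ) := by exact_mod_cast (by omega : (0:ℤ) < a)
  set Q' := Q.filter (fun j => Even j ∧ |j| ≤ N) with hQ'
  have hstep1 : ∑ j ∈ Q, (if Even k ∧ Even j ∧ N < |k| ∧ |j| ≤ N
        then r (j + k) * g k / ((|k - j| : ℤ) : ℝ) else 0)
      = ∑ j ∈ Q', g k * (r (j + k) * (((|k - j| : ℤ) : ℝ))⁻¹) := by
    rw [hQ', Finset.sum_filter]
    apply Finset.sum_congr rfl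
    intro j _
    by_cases h : Even j ∧ |j| ≤ N
    · rw [if_pos h, if_pos ⟨hk, h.1, hkN, h.2⟩, div_eq_mul_inv]; ring
    · rw [if_neg h, if_neg (by tauto)]
  rw [hstep1, ← Finset.mul_sum]
  have hQ'mem : ∀ j ∈ Q', Even j ∧ |j| ≤ N := fun j hj => (Finset.mem_filter.1 hj).2
  have hCS : ∑ j ∈ Q', r (j + k) * (((|k - j| : ℤ) : ℝ))⁻¹
      ≤ Real.sqrt (∑ j ∈ Q', r (j + k) ^ 2)
        * Real.sqrt (∑ j ∈ Q', ((((|k - j| : ℤ) : ℝ))⁻¹) ^ 2) :=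
    Real.sum_mul_le_sqrt_mul_sqrt _ _ _
  have hb1 : Real.sqrt (∑ j ∈ Q', r (j + k) ^ 2) ≤ evenL2Norm r := by
    have he : ∑ j ∈ Q', r (j + k) ^ 2 = ∑ m ∈ Q'.image (fun j => j + k), r m ^ 2 := by
      rw [Finset.sum_image (fun x _ y _ h => by omega)]
    have hle : ∑ j ∈ Q', r (j + k) ^ 2 ≤ evenL2Norm r ^ 2 := by
      rw [he]
      apply sum_sq_le r hr
      intro m hm
      obtain ⟨j, hj, rfl⟩ := Finset.mem_image.1 hm
      exact (hQ'mem j hj).1.add hk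
    calc Real.sqrt (∑ j ∈ Q', r (j + k) ^ 2) ≤ Real.sqrt (evenL2Norm r ^ 2) :=
        Real.sqrt_le_sqrt hle
      _ = evenL2Norm r := Real.sqrt_sq (Real.sqrt_nonneg _)
  have hb2 : Real.sqrt (∑ j ∈ Q', ((((|k - j| : ℤ) : ℝ))⁻¹) ^ 2)
      ≤ 2 * Real.sqrt ((a:ℝ))⁻¹ := by
    have hterm : ∀ j : ℤ, ((((|k - j| : ℤ) : ℝ))⁻¹) ^ 2 = (((k - j : ℤ) : ℝ) ^ 2)⁻¹ := by
      intro j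
      rw [inv_pow]
      congr 1
      push_cast
      rw [sq_abs]
    have hsum2 : ∑ j ∈ Q', ((((|k - j| : ℤ) : ℝ))⁻¹) ^ 2 ≤ 2 / (a:ℝ) := by
      rcases lt_or_ge 0 k with hk0 | hk0
      · have himg : ∑ j ∈ Q', ((((|k - j| : ℤ) : ℝ))⁻¹) ^ 2
            = ∑ m ∈ Q'.image (fun j => k - j), (((m : ℤ) : ℝ) ^ 2)⁻¹ := by
          rw [Finset.sum_image (fun x _ y _ h => by omega)]
          exact Finset.sum_congr rfl (fun j _ => hterm j)
        rw [himg]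
        apply invsq ha2
        intro m hm
        obtain ⟨j, hj, rfl⟩ := Finset.mem_image.1 hm
        obtain ⟨hje, hjN⟩ := hQ'mem j hj
        have h3 : j ≤ N := (abs_le.1 hjN).2
        rw [abs_of_pos hk0] at ha
        omega
      · have hk0' : k < 0 := by
          rcases hk0.lt_or_eq with h | h
          · exact h
          · exfalso; rw [h] at hkN; simp at hkN; omega
        have himg : ∑ j ∈ Q', ((((|k - j| : ℤ) : ℝ))⁻¹) ^ 2
            = ∑ m ∈ Q'.image (fun j => j - k), (((m : ℤ) : ℝ) ^ 2)⁻¹ := by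
          rw [Finset.sum_image (fun x _ y _ h => by omega)]
          refine Finset.sum_congr rfl (fun j _ => ?_)
          rw [hterm j]
          congr 1
          push_cast
          ring
        rw [himg]
        apply invsq ha2
        intro m hm
        obtain ⟨j, hj, rfl⟩ := Finset.mem_image.1 hm
        obtain ⟨hje, hjN⟩ := hQ'mem j hj
        have h3 : -N ≤ j := (abs_le.1 hjN).1
        rw [abs_of_neg hk0'] at ha
        omega
    calc Real.sqrt (∑ j ∈ Q', ((((|k - j| : ℤ) : ℝ))⁻¹) ^ 2)
        ≤ Real.sqrt (4 / (a:ℝ)) := by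
          apply Real.sqrt_le_sqrt
          calc ∑ j ∈ Q', ((((|k - j| : ℤ) : ℝ))⁻¹) ^ 2 ≤ 2 / (a:ℝ) := hsum2
            _ ≤ 4 / (a:ℝ) := by
              gcongr
              norm_num
      _ = 2 * Real.sqrt ((a:ℝ))⁻¹ := by
          rw [div_eq_mul_inv, Real.sqrt_mul (by norm_num : (0:ℝ) ≤ 4),
            show (4:ℝ) = 2 ^ 2 by norm_num, Real.sqrt_sq (by norm_num : (0:ℝ) ≤ 2)]
  have hfinal : ∑ j ∈ Q', r (j + k) * (((|k - j| : ℤ) : ℝ))⁻¹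
      ≤ evenL2Norm r * (2 * Real.sqrt ((a:ℝ))⁻¹) :=
    le_trans hCS (mul_le_mul hb1 hb2 (Real.sqrt_nonneg _) (Real.sqrt_nonneg _))
  exact mul_le_mul_of_nonneg_left hfinal (hg k)


lemma term_bound {δ : ℝ} (hδ : 1 < δ) {N u : ℤ} (h0 : 0 ≤ u) (hu : u ≤ N) :
    ((((N + 2 - u : ℤ)) : ℝ))⁻¹ * (Real.log ((u:ℝ) + Real.exp 1) ^ δ)⁻¹
      ≤ 2 ^ δ * ((((N + 2 - u : ℤ):ℝ) * Real.log (((N + 2 - u : ℤ):ℝ) + Real.exp 1) ^ δ)⁻¹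
        + (((u + 2 : ℤ):ℝ) * Real.log (((u + 2 : ℤ):ℝ) + Real.exp 1) ^ δ)⁻¹) := by
  have hδ0 : (0:ℝ) < δ := by linarith
  set A : ℝ := ((N + 2 - u : ℤ):ℝ) with hA
  set B : ℝ := ((u + 2 : ℤ):ℝ) with hB
  have hA2 : (2:ℝ) ≤ A := by rw [hA]; exact_mod_cast (by omega : (2:ℤ) ≤ N + 2 - u)
  have hB2 : (2:ℝ) ≤ B := by rw [hB]; exact_mod_cast (by omega : (2:ℤ) ≤ u + 2)
  have hx : (0:ℝ) ≤ (u:ℝ) := by exact_mod_cast h0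
  have hLA : (1:ℝ) ≤ Real.log (A + Real.exp 1) := one_le_logE (by linarith)
  have hLB : (1:ℝ) ≤ Real.log (B + Real.exp 1) := one_le_logE (by linarith)
  have hLx : (1:ℝ) ≤ Real.log ((u:ℝ) + Real.exp 1) := one_le_logE hx
  have hLAp : (0:ℝ) < Real.log (A + Real.exp 1) ^ δ := Real.rpow_pos_of_pos (by linarith) δ
  have hLBp : (0:ℝ) < Real.log (B + Real.exp 1) ^ δ := Real.rpow_pos_of_pos (by linarith) δ
  have hLxp : (0:ℝ) < Real.log ((u:ℝ) + Real.exp 1) ^ δ := Real.rpow_pos_of_pos (by linarith) δ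
  have h2δ : (0:ℝ) < 2 ^ (δ:ℝ) := Real.rpow_pos_of_pos (by norm_num) δ
  rcases le_or_gt N (2*u) with hcase | hcase
  · -- A ≤ u + 2 : use the A-term
    have hAx : A ≤ (u:ℝ) + 2 := by rw [hA]; push_cast; have hc : (N:ℝ) ≤ 2*(u:ℝ) := (by exact_mod_cast hcase); linarith
    have hcore : Real.log (A + Real.exp 1) ^ δ ≤ 2 ^ δ * Real.log ((u:ℝ) + Real.exp 1) ^ δ :=
      core_log hδ0 hx (by linarith) hAx
    have h1 : (Real.log ((u:ℝ) + Real.exp 1) ^ δ)⁻¹ ≤ 2 ^ δ * (Real.log (A + Real.exp 1) ^ δ)⁻¹ := by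
      calc (Real.log ((u:ℝ) + Real.exp 1) ^ δ)⁻¹
          = 2 ^ (δ:ℝ) * ((2 ^ (δ:ℝ))⁻¹ * (Real.log ((u:ℝ) + Real.exp 1) ^ δ)⁻¹) := by
            field_simp
        _ ≤ 2 ^ (δ:ℝ) * (Real.log (A + Real.exp 1) ^ δ)⁻¹ := by
            apply mul_le_mul_of_nonneg_left _ h2δ.le
            calc (2 ^ (δ:ℝ))⁻¹ * (Real.log ((u:ℝ) + Real.exp 1) ^ δ)⁻¹
                = (2 ^ (δ:ℝ) * Real.log ((u:ℝ) + Real.exp 1) ^ δ)⁻¹ := by rw [mul_inv]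
              _ ≤ _ := inv_anti₀ hLAp hcore
    calc A⁻¹ * (Real.log ((u:ℝ) + Real.exp 1) ^ δ)⁻¹
        ≤ A⁻¹ * (2 ^ δ * (Real.log (A + Real.exp 1) ^ δ)⁻¹) :=
          mul_le_mul_of_nonneg_left h1 (by positivity)
      _ = 2 ^ δ * (A * Real.log (A + Real.exp 1) ^ δ)⁻¹ := by
          rw [mul_inv]; ring
      _ ≤ _ := by
          apply mul_le_mul_of_nonneg_left _ h2δ.le
          have : (0:ℝ) ≤ (B * Real.log (B + Real.exp 1) ^ δ)⁻¹ := by positivity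
          linarith
  · -- B ≤ A : use the B-term
    have hBA : B ≤ A := by rw [hA, hB]; push_cast; have hc : 2*(u:ℝ) ≤ (N:ℝ) := (by exact_mod_cast hcase.le); linarith
    have hBx : B ≤ (u:ℝ) + 2 := by rw [hB]; push_cast; linarith
    have hcore : Real.log (B + Real.exp 1) ^ δ ≤ 2 ^ δ * Real.log ((u:ℝ) + Real.exp 1) ^ δ :=
      core_log hδ0 hx (by linarith) hBx
    have h1 : (Real.log ((u:ℝ) + Real.exp 1) ^ δ)⁻¹ ≤ 2 ^ δ * (Real.log (B + Real.exp 1) ^ δ)⁻¹ := by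
      calc (Real.log ((u:ℝ) + Real.exp 1) ^ δ)⁻¹
          = 2 ^ (δ:ℝ) * ((2 ^ (δ:ℝ))⁻¹ * (Real.log ((u:ℝ) + Real.exp 1) ^ δ)⁻¹) := by
            field_simp
        _ ≤ 2 ^ (δ:ℝ) * (Real.log (B + Real.exp 1) ^ δ)⁻¹ := by
            apply mul_le_mul_of_nonneg_left _ h2δ.le
            calc (2 ^ (δ:ℝ))⁻¹ * (Real.log ((u:ℝ) + Real.exp 1) ^ δ)⁻¹
                = (2 ^ (δ:ℝ) * Real.log ((u:ℝ) + Real.exp 1) ^ δ)⁻¹ := by rw [mul_inv]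
              _ ≤ _ := inv_anti₀ hLBp hcore
    calc A⁻¹ * (Real.log ((u:ℝ) + Real.exp 1) ^ δ)⁻¹
        ≤ B⁻¹ * (2 ^ δ * (Real.log (B + Real.exp 1) ^ δ)⁻¹) := by
          apply mul_le_mul (inv_anti₀ (by linarith) hBA) h1 (by positivity) (by positivity)
      _ = 2 ^ δ * (B * Real.log (B + Real.exp 1) ^ δ)⁻¹ := by
          rw [mul_inv]; ring
      _ ≤ _ := by
          apply mul_le_mul_of_nonneg_left _ h2δ.le
          have : (0:ℝ) ≤ (A * Real.log (A + Real.exp 1) ^ δ)⁻¹ := by positivity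
          linarith

lemma phi_U {δ : ℝ} (hδ : 1 < δ) {K : ℝ}
    (hK : ∀ D : Finset ℤ, (∀ m ∈ D, (2:ℤ) ≤ m) →
      ∑ m ∈ D, ((m : ℝ) * Real.log ((m : ℝ) + Real.exp 1) ^ δ)⁻¹ ≤ K)
    {N : ℤ} (U : Finset ℤ) (hU : ∀ u ∈ U, 0 ≤ u ∧ u ≤ N) :
    ∑ u ∈ U, ((((N + 2 - u : ℤ)) : ℝ))⁻¹ * (Real.log ((u:ℝ) + Real.exp 1) ^ δ)⁻¹
      ≤ 2 ^ δ * (2 * K) := by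
  have hKnn : ∀ (m : ℤ), 0 ≤ ((m : ℝ) * Real.log ((m : ℝ) + Real.exp 1) ^ δ)⁻¹ → True := fun _ _ => trivial
  calc ∑ u ∈ U, ((((N + 2 - u : ℤ)) : ℝ))⁻¹ * (Real.log ((u:ℝ) + Real.exp 1) ^ δ)⁻¹
      ≤ ∑ u ∈ U, 2 ^ δ * ((((N + 2 - u : ℤ):ℝ) * Real.log (((N + 2 - u : ℤ):ℝ) + Real.exp 1) ^ δ)⁻¹
          + (((u + 2 : ℤ):ℝ) * Real.log (((u + 2 : ℤ):ℝ) + Real.exp 1) ^ δ)⁻¹) :=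
        Finset.sum_le_sum (fun u hu => term_bound hδ (hU u hu).1 (hU u hu).2)
    _ = 2 ^ δ * ((∑ u ∈ U, (((N + 2 - u : ℤ):ℝ) * Real.log (((N + 2 - u : ℤ):ℝ) + Real.exp 1) ^ δ)⁻¹)
          + ∑ u ∈ U, (((u + 2 : ℤ):ℝ) * Real.log (((u + 2 : ℤ):ℝ) + Real.exp 1) ^ δ)⁻¹) := by
        rw [← Finset.mul_sum, Finset.sum_add_distrib]
    _ ≤ 2 ^ δ * (K + K) := by
        apply mul_le_mul_of_nonneg_left _ (Real.rpow_pos_of_pos (by norm_num) δ).le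
        have h1 : ∑ u ∈ U, (((N + 2 - u : ℤ):ℝ) * Real.log (((N + 2 - u : ℤ):ℝ) + Real.exp 1) ^ δ)⁻¹ ≤ K := by
          have he : ∑ u ∈ U, (((N + 2 - u : ℤ):ℝ) * Real.log (((N + 2 - u : ℤ):ℝ) + Real.exp 1) ^ δ)⁻¹
              = ∑ m ∈ U.image (fun u : ℤ => N + 2 - u), ((m:ℝ) * Real.log ((m:ℝ) + Real.exp 1) ^ δ)⁻¹ :=
            (Finset.sum_image (g := fun u : ℤ => N + 2 - u)
              (f := fun m : ℤ => ((m:ℝ) * Real.log ((m:ℝ) + Real.exp 1) ^ δ)⁻¹)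
              (fun x _ y _ h => by exact (by omega : N + 2 - x = N + 2 - y → x = y) h)).symm
          rw [he]
          apply hK
          intro m hm
          obtain ⟨u, hu, rfl⟩ := Finset.mem_image.1 hm
          have := hU u hu; omega
        have h2 : ∑ u ∈ U, (((u + 2 : ℤ):ℝ) * Real.log (((u + 2 : ℤ):ℝ) + Real.exp 1) ^ δ)⁻¹ ≤ K := by
          have he : ∑ u ∈ U, (((u + 2 : ℤ):ℝ) * Real.log (((u + 2 : ℤ):ℝ) + Real.exp 1) ^ δ)⁻¹
              = ∑ m ∈ U.image (fun u : ℤ => u + 2), ((m:ℝ) * Real.log ((m:ℝ) + Real.exp 1) ^ δ)⁻¹ :=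
            (Finset.sum_image (g := fun u : ℤ => u + 2)
              (f := fun m : ℤ => ((m:ℝ) * Real.log ((m:ℝ) + Real.exp 1) ^ δ)⁻¹)
              (fun x _ y _ h => by exact (by omega : x + 2 = y + 2 → x = y) h)).symm
          rw [he]
          apply hK
          intro m hm
          obtain ⟨u, hu, rfl⟩ := Finset.mem_image.1 hm
          have := hU u hu; omega
        linarith
    _ = 2 ^ δ * (2 * K) := by ring

lemma phi_full {δ : ℝ} (hδ : 1 < δ) {K : ℝ}
    (hK : ∀ D : Finset ℤ, (∀ m ∈ D, (2:ℤ) ≤ m) →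
      ∑ m ∈ D, ((m : ℝ) * Real.log ((m : ℝ) + Real.exp 1) ^ δ)⁻¹ ≤ K)
    {N : ℤ} (P : Finset ℤ) (hP : ∀ k ∈ P, |k| ≤ N) :
    ∑ k ∈ P, ((((N + 2 - |k| : ℤ)) : ℝ))⁻¹ * (Real.log (((|k| : ℤ) : ℝ) + Real.exp 1) ^ δ)⁻¹
      ≤ 2 * (2 ^ δ * (2 * K)) := by
  rw [← Finset.sum_filter_add_sum_filter_not P (fun k => 0 ≤ k)]
  have hpos : ∑ k ∈ P.filter (fun k => 0 ≤ k),
      ((((N + 2 - |k| : ℤ)) : ℝ))⁻¹ * (Real.log (((|k| : ℤ) : ℝ) + Real.exp 1) ^ δ)⁻¹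
      ≤ 2 ^ δ * (2 * K) := by
    have he : ∑ k ∈ P.filter (fun k => 0 ≤ k),
        ((((N + 2 - |k| : ℤ)) : ℝ))⁻¹ * (Real.log (((|k| : ℤ) : ℝ) + Real.exp 1) ^ δ)⁻¹
        = ∑ k ∈ P.filter (fun k => 0 ≤ k),
        ((((N + 2 - k : ℤ)) : ℝ))⁻¹ * (Real.log ((k : ℝ) + Real.exp 1) ^ δ)⁻¹ := by
      refine Finset.sum_congr rfl (fun k hk => ?_)
      rw [abs_of_nonneg (Finset.mem_filter.1 hk).2]
    rw [he]
    refine phi_U hδ hK _ (fun u hu => ?_)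
    obtain ⟨huP, hu0⟩ := Finset.mem_filter.1 hu
    exact ⟨hu0, le_trans (le_abs_self u) (hP u huP)⟩
  have hneg : ∑ k ∈ P.filter (fun k => ¬ 0 ≤ k),
      ((((N + 2 - |k| : ℤ)) : ℝ))⁻¹ * (Real.log (((|k| : ℤ) : ℝ) + Real.exp 1) ^ δ)⁻¹
      ≤ 2 ^ δ * (2 * K) := by
    have he : ∑ k ∈ P.filter (fun k => ¬ 0 ≤ k),
        ((((N + 2 - |k| : ℤ)) : ℝ))⁻¹ * (Real.log (((|k| : ℤ) : ℝ) + Real.exp 1) ^ δ)⁻¹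
        = ∑ m ∈ (P.filter (fun k => ¬ 0 ≤ k)).image (fun k => -k),
        ((((N + 2 - m : ℤ)) : ℝ))⁻¹ * (Real.log ((m : ℝ) + Real.exp 1) ^ δ)⁻¹ := by
      rw [Finset.sum_image (fun x _ y _ h => by omega)]
      refine Finset.sum_congr rfl (fun k hk => ?_)
      rw [abs_of_neg (by have := (Finset.mem_filter.1 hk).2; omega : k < 0)]
    rw [he]
    refine phi_U hδ hK _ (fun u hu => ?_)
    obtain ⟨k, hk, rfl⟩ := Finset.mem_image.1 hu
    obtain ⟨hkP, hk0⟩ := Finset.mem_filter.1 hk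
    have h1 := hP k hkP
    rw [abs_of_neg (by omega : k < 0)] at h1
    exact ⟨by omega, h1⟩
  linarith

lemma psi_full {δ : ℝ} (hδ : 1 < δ) {K : ℝ}
    (hK : ∀ D : Finset ℤ, (∀ m ∈ D, (2:ℤ) ≤ m) →
      ∑ m ∈ D, ((m : ℝ) * Real.log ((m : ℝ) + Real.exp 1) ^ δ)⁻¹ ≤ K)
    {N : ℤ} (hN0 : 0 ≤ N) (hN : Even N) (P : Finset ℤ)
    (hP : ∀ k ∈ P, N < |k| ∧ Even k) :
    ∑ k ∈ P, ((((|k| - N : ℤ)) : ℝ))⁻¹ * (Real.log (((|k| : ℤ) : ℝ) + Real.exp 1) ^ δ)⁻¹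
      ≤ 2 * K := by
  have hterm : ∀ k ∈ P, ((((|k| - N : ℤ)) : ℝ))⁻¹ * (Real.log (((|k| : ℤ) : ℝ) + Real.exp 1) ^ δ)⁻¹
      ≤ (((|k| - N : ℤ) : ℝ) * Real.log (((|k| - N : ℤ) : ℝ) + Real.exp 1) ^ δ)⁻¹ := by
    intro k hk
    obtain ⟨hkN, hke⟩ := hP k hk
    have hm2 : (2:ℤ) ≤ |k| - N := by
      have := even_gt hN (even_abs' hke) hkN; omega
    have hmR : (0:ℝ) < ((|k| - N : ℤ) : ℝ) := by exact_mod_cast (by omega : (0:ℤ) < |k| - N)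
    have hmk : ((|k| - N : ℤ) : ℝ) ≤ ((|k| : ℤ) : ℝ) := by exact_mod_cast (by omega : |k| - N ≤ |k|)
    have hL1 : (1:ℝ) ≤ Real.log (((|k| - N : ℤ) : ℝ) + Real.exp 1) := one_le_logE hmR.le
    have hlog : Real.log (((|k| - N : ℤ) : ℝ) + Real.exp 1) ^ δ
        ≤ Real.log (((|k| : ℤ) : ℝ) + Real.exp 1) ^ δ := by
      apply Real.rpow_le_rpow (by linarith) (Real.log_le_log (by positivity) (by linarith)) (by linarith)
    rw [mul_inv]
    apply mul_le_mul_of_nonneg_left _ (by positivity)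
    exact inv_anti₀ (by positivity) hlog
  calc ∑ k ∈ P, ((((|k| - N : ℤ)) : ℝ))⁻¹ * (Real.log (((|k| : ℤ) : ℝ) + Real.exp 1) ^ δ)⁻¹
      ≤ ∑ k ∈ P, (((|k| - N : ℤ) : ℝ) * Real.log (((|k| - N : ℤ) : ℝ) + Real.exp 1) ^ δ)⁻¹ :=
        Finset.sum_le_sum hterm
    _ = ∑ k ∈ P.filter (fun k => 0 ≤ k), (((|k| - N : ℤ) : ℝ) * Real.log (((|k| - N : ℤ) : ℝ) + Real.exp 1) ^ δ)⁻¹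
        + ∑ k ∈ P.filter (fun k => ¬ 0 ≤ k), (((|k| - N : ℤ) : ℝ) * Real.log (((|k| - N : ℤ) : ℝ) + Real.exp 1) ^ δ)⁻¹ :=
        (Finset.sum_filter_add_sum_filter_not P _ _).symm
    _ ≤ K + K := by
        have h1 : ∑ k ∈ P.filter (fun k => 0 ≤ k),
            (((|k| - N : ℤ) : ℝ) * Real.log (((|k| - N : ℤ) : ℝ) + Real.exp 1) ^ δ)⁻¹ ≤ K := by
          have he : ∑ k ∈ P.filter (fun k => 0 ≤ k),
              (((|k| - N : ℤ) : ℝ) * Real.log (((|k| - N : ℤ) : ℝ) + Real.exp 1) ^ δ)⁻¹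
              = ∑ m ∈ (P.filter (fun k => 0 ≤ k)).image (fun k => k - N),
              ((m : ℝ) * Real.log ((m : ℝ) + Real.exp 1) ^ δ)⁻¹ := by
            rw [Finset.sum_image (fun x _ y _ h => by omega)]
            refine Finset.sum_congr rfl (fun k hk => ?_)
            rw [abs_of_nonneg (Finset.mem_filter.1 hk).2]
          rw [he]
          apply hK
          intro m hm
          obtain ⟨k, hk, rfl⟩ := Finset.mem_image.1 hm
          obtain ⟨hkP, hk0⟩ := Finset.mem_filter.1 hk
          obtain ⟨hkN, hke⟩ := hP k hkP
          have := even_gt hN (even_abs' hke) hkN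
          rw [abs_of_nonneg hk0] at this
          omega
        have h2 : ∑ k ∈ P.filter (fun k => ¬ 0 ≤ k),
            (((|k| - N : ℤ) : ℝ) * Real.log (((|k| - N : ℤ) : ℝ) + Real.exp 1) ^ δ)⁻¹ ≤ K := by
          have he : ∑ k ∈ P.filter (fun k => ¬ 0 ≤ k),
              (((|k| - N : ℤ) : ℝ) * Real.log (((|k| - N : ℤ) : ℝ) + Real.exp 1) ^ δ)⁻¹
              = ∑ m ∈ (P.filter (fun k => ¬ 0 ≤ k)).image (fun k => -k - N),
              ((m : ℝ) * Real.log ((m : ℝ) + Real.exp 1) ^ δ)⁻¹ := by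
            rw [Finset.sum_image (fun x _ y _ h => by omega)]
            refine Finset.sum_congr rfl (fun k hk => ?_)
            rw [abs_of_neg (by have := (Finset.mem_filter.1 hk).2; omega : k < 0)]
          rw [he]
          apply hK
          intro m hm
          obtain ⟨k, hk, rfl⟩ := Finset.mem_image.1 hm
          obtain ⟨hkP, hk0⟩ := Finset.mem_filter.1 hk
          obtain ⟨hkN, hke⟩ := hP k hkP
          have := even_gt hN (even_abs' hke) hkN
          rw [abs_of_neg (by omega : k < 0)] at this
          omega
        linarith
    _ = 2 * K := by ring

lemma sum_gw_le {δ : ℝ} (g : ℤ → ℝ)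
    (hg : Summable fun k : ℤ => if Even k then g k ^ 2 * Real.log (|k| + Real.exp 1) ^ δ else 0)
    (T : Finset ℤ) (hT : ∀ m ∈ T, Even m) :
    ∑ m ∈ T, g m ^ 2 * Real.log ((|m| : ℤ) + Real.exp 1) ^ δ ≤ evenLogNorm g δ ^ 2 := by
  have h0 : ∀ k : ℤ, 0 ≤ (if Even k then g k ^ 2 * Real.log (|k| + Real.exp 1) ^ δ else 0) := by
    intro k
    split
    · have h1 : (0:ℝ) ≤ ((|k| : ℤ) : ℝ) := by exact_mod_cast abs_nonneg k
      have := one_le_logE h1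
      have h2 : (0:ℝ) ≤ Real.log (((|k| : ℤ) : ℝ) + Real.exp 1) ^ δ := Real.rpow_nonneg (by linarith) δ
      exact mul_nonneg (sq_nonneg _) h2
    · exact le_rfl
  have h1 : evenLogNorm g δ ^ 2 = ∑' k : ℤ, if Even k then g k ^ 2 * Real.log (|k| + Real.exp 1) ^ δ else 0 :=
    Real.sq_sqrt (tsum_nonneg h0)
  rw [h1]
  calc ∑ m ∈ T, g m ^ 2 * Real.log ((|m| : ℤ) + Real.exp 1) ^ δ
      = ∑ m ∈ T, (if Even m then g m ^ 2 * Real.log (|m| + Real.exp 1) ^ δ else 0) :=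
      Finset.sum_congr rfl (fun m hm => by rw [if_pos (hT m hm)])
    _ ≤ _ := Summable.sum_le_tsum T (fun k _ => h0 k) hg

end Stmt7Aux

/-- For every `δ > 1` there is `C(δ) > 0` such that for all nonnegative
sequences `r ∈ ℓ²(2ℤ)` and `g` with `|g|_δ < ∞`, and every even `N ≥ 0`,
`σ₁(N) ≤ C(δ)‖r‖|g|_δ` and `σ₂(N) ≤ C(δ)‖r‖|g|_δ`. -/
theorem stmt7 (δ : ℝ) (hδ : 1 < δ) :
    ∃ C > 0, ∀ r g : ℤ → ℝ, (∀ k, 0 ≤ r k) → (∀ k, 0 ≤ g k) →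
      (Summable fun k : ℤ => if Even k then r k ^ 2 else 0) →
      (Summable fun k : ℤ => if Even k then g k ^ 2 * Real.log (|k| + Real.exp 1) ^ δ else 0) →
      ∀ N : ℤ, 0 ≤ N → Even N →
        sigma1 r g N ≤ C * evenL2Norm r * evenLogNorm g δ ∧
        sigma2 r g N ≤ C * evenL2Norm r * evenLogNorm g δ := by
  classical
  obtain ⟨K, hK1, hK⟩ := bertrand hδ
  have h2δ : (0:ℝ) < 2 ^ (δ:ℝ) := Real.rpow_pos_of_pos (by norm_num) δ
  have hΦ1pos : (0:ℝ) < 2 * (2 ^ δ * (2 * K)) := by positivity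
  have hΦ2pos : (0:ℝ) < 2 * K := by linarith
  set c₁ : ℝ := 2 * Real.sqrt (2 * (2 ^ δ * (2 * K))) with hc₁
  set c₂ : ℝ := 2 * Real.sqrt (2 * K) with hc₂
  have hc₁0 : 0 < c₁ := by rw [hc₁]; positivity
  have hc₂0 : 0 < c₂ := by
    rw [hc₂]
    have := Real.sqrt_pos.2 hΦ2pos
    linarith
  refine ⟨c₁ + c₂, by linarith, ?_⟩
  intro r g hr0 hg0 hr hg N hN0 hN
  have hA0 : 0 ≤ evenL2Norm r := Real.sqrt_nonneg _
  have hB0 : 0 ≤ evenLogNorm g δ := Real.sqrt_nonneg _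
  have hw : ∀ k : ℤ, (0:ℝ) < Real.log (((|k| : ℤ) : ℝ) + Real.exp 1) ^ δ := by
    intro k
    have h1 : (0:ℝ) ≤ ((|k| : ℤ) : ℝ) := by exact_mod_cast abs_nonneg k
    exact Real.rpow_pos_of_pos (by linarith [one_le_logE h1]) δ
  constructor
  · -- sigma1
    have hfnn : ∀ p : ℤ × ℤ, 0 ≤ (if Even p.1 ∧ Even p.2 ∧ |p.1| ≤ N ∧ N < |p.2|
        then r (p.2 + p.1) * g p.1 / ((|p.2 - p.1| : ℤ) : ℝ) else 0) := by
      intro p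
      split
      · apply div_nonneg (mul_nonneg (hr0 _) (hg0 _)) (by exact_mod_cast abs_nonneg _)
      · exact le_rfl
    rw [sigma1]
    by_cases hsum : Summable (fun p : ℤ × ℤ => if Even p.1 ∧ Even p.2 ∧ |p.1| ≤ N ∧ N < |p.2|
        then r (p.2 + p.1) * g p.1 / ((|p.2 - p.1| : ℤ) : ℝ) else 0)
    swap
    · rw [tsum_eq_zero_of_not_summable hsum]
      have : (0:ℝ) ≤ (c₁ + c₂) * evenL2Norm r := mul_nonneg (by linarith) hA0
      exact mul_nonneg this hB0
    apply Summable.tsum_le_of_sum_le hsum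
    intro s
    set P := s.image Prod.fst with hPdef
    set Q := s.image Prod.snd with hQdef
    have hsub : s ⊆ P ×ˢ Q := by
      intro p hp
      rw [Finset.mem_product]
      exact ⟨Finset.mem_image_of_mem _ hp, Finset.mem_image_of_mem _ hp⟩
    refine le_trans (Finset.sum_le_sum_of_subset_of_nonneg hsub (fun p _ _ => hfnn p)) ?_
    rw [Finset.sum_product]
    have hinner : ∀ k ∈ P, (∑ j ∈ Q, if Even (k, j).1 ∧ Even (k, j).2 ∧ |(k, j).1| ≤ N ∧ N < |(k, j).2|
          then r ((k, j).2 + (k, j).1) * g (k, j).1 / ((|(k, j).2 - (k, j).1| : ℤ) : ℝ) else 0)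
        ≤ (if Even k ∧ |k| ≤ N
          then g k * (evenL2Norm r * (2 * Real.sqrt ((((N + 2 - |k| : ℤ)) : ℝ))⁻¹)) else 0) := by
      intro k _
      by_cases hk : Even k ∧ |k| ≤ N
      · rw [if_pos hk]
        exact inner1 r g hg0 hr hN hk.1 hk.2 Q
      · rw [if_neg hk]
        apply le_of_eq
        apply Finset.sum_eq_zero
        intro j _
        rw [if_neg (by tauto)]
    refine le_trans (Finset.sum_le_sum hinner) ?_
    rw [← Finset.sum_filter]
    set P' := P.filter (fun k => Even k ∧ |k| ≤ N) with hP'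
    have hP'mem : ∀ k ∈ P', Even k ∧ |k| ≤ N := fun k hk => (Finset.mem_filter.1 hk).2
    have ha : ∀ k ∈ P', (0:ℝ) < (((N + 2 - |k| : ℤ)) : ℝ) := by
      intro k hk
      exact_mod_cast (by have := (hP'mem k hk).2; omega : (0:ℤ) < N + 2 - |k|)
    have hsum_eq : ∑ k ∈ P', g k * (evenL2Norm r * (2 * Real.sqrt ((((N + 2 - |k| : ℤ)) : ℝ))⁻¹))
        = (2 * evenL2Norm r) * ∑ k ∈ P',
            (g k * Real.sqrt (Real.log (((|k| : ℤ) : ℝ) + Real.exp 1) ^ δ))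
            * Real.sqrt (((((N + 2 - |k| : ℤ)) : ℝ))⁻¹
              * (Real.log (((|k| : ℤ) : ℝ) + Real.exp 1) ^ δ)⁻¹) := by
      rw [Finset.mul_sum]
      refine Finset.sum_congr rfl (fun k hk => ?_)
      have hwk := hw k
      have hak := ha k hk
      have hsq : Real.sqrt (Real.log (((|k| : ℤ) : ℝ) + Real.exp 1) ^ δ)
          * Real.sqrt (((((N + 2 - |k| : ℤ)) : ℝ))⁻¹
            * (Real.log (((|k| : ℤ) : ℝ) + Real.exp 1) ^ δ)⁻¹)
          = Real.sqrt ((((N + 2 - |k| : ℤ)) : ℝ))⁻¹ := by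
        rw [← Real.sqrt_mul hwk.le]
        congr 1
        rw [mul_left_comm, mul_inv_cancel₀ hwk.ne', mul_one]
      rw [mul_assoc (g k), hsq]
      rw [Real.sqrt_inv]
      ring
    rw [hsum_eq]
    have hCS := Real.sum_mul_le_sqrt_mul_sqrt P'
      (fun k => g k * Real.sqrt (Real.log (((|k| : ℤ) : ℝ) + Real.exp 1) ^ δ))
      (fun k => Real.sqrt (((((N + 2 - |k| : ℤ)) : ℝ))⁻¹
        * (Real.log (((|k| : ℤ) : ℝ) + Real.exp 1) ^ δ)⁻¹))
    have hu2 : ∑ k ∈ P', (g k * Real.sqrt (Real.log (((|k| : ℤ) : ℝ) + Real.exp 1) ^ δ)) ^ 2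
        = ∑ k ∈ P', g k ^ 2 * Real.log (((|k| : ℤ) : ℝ) + Real.exp 1) ^ δ := by
      refine Finset.sum_congr rfl (fun k hk => ?_)
      rw [mul_pow, Real.sq_sqrt (hw k).le]
    have hv2 : ∑ k ∈ P', (Real.sqrt (((((N + 2 - |k| : ℤ)) : ℝ))⁻¹
          * (Real.log (((|k| : ℤ) : ℝ) + Real.exp 1) ^ δ)⁻¹)) ^ 2
        = ∑ k ∈ P', ((((N + 2 - |k| : ℤ)) : ℝ))⁻¹
          * (Real.log (((|k| : ℤ) : ℝ) + Real.exp 1) ^ δ)⁻¹ := by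
      refine Finset.sum_congr rfl (fun k hk => ?_)
      apply Real.sq_sqrt
      have := ha k hk
      have := hw k
      positivity
    rw [hu2, hv2] at hCS
    have hBb : Real.sqrt (∑ k ∈ P', g k ^ 2 * Real.log (((|k| : ℤ) : ℝ) + Real.exp 1) ^ δ)
        ≤ evenLogNorm g δ := by
      have hle := sum_gw_le g hg P' (fun m hm => (hP'mem m hm).1)
      calc Real.sqrt (∑ k ∈ P', g k ^ 2 * Real.log (((|k| : ℤ) : ℝ) + Real.exp 1) ^ δ)
          ≤ Real.sqrt (evenLogNorm g δ ^ 2) := Real.sqrt_le_sqrt hle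
        _ = evenLogNorm g δ := Real.sqrt_sq hB0
    have hΦ : ∑ k ∈ P', ((((N + 2 - |k| : ℤ)) : ℝ))⁻¹
        * (Real.log (((|k| : ℤ) : ℝ) + Real.exp 1) ^ δ)⁻¹ ≤ 2 * (2 ^ δ * (2 * K)) :=
      phi_full hδ hK P' (fun k hk => (hP'mem k hk).2)
    have hΦb : Real.sqrt (∑ k ∈ P', ((((N + 2 - |k| : ℤ)) : ℝ))⁻¹
        * (Real.log (((|k| : ℤ) : ℝ) + Real.exp 1) ^ δ)⁻¹)
        ≤ Real.sqrt (2 * (2 ^ δ * (2 * K))) := Real.sqrt_le_sqrt hΦ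
    have hfin : ∑ k ∈ P', (g k * Real.sqrt (Real.log (((|k| : ℤ) : ℝ) + Real.exp 1) ^ δ))
          * Real.sqrt (((((N + 2 - |k| : ℤ)) : ℝ))⁻¹
            * (Real.log (((|k| : ℤ) : ℝ) + Real.exp 1) ^ δ)⁻¹)
        ≤ evenLogNorm g δ * Real.sqrt (2 * (2 ^ δ * (2 * K))) :=
      le_trans hCS (mul_le_mul hBb hΦb (Real.sqrt_nonneg _) hB0)
    calc (2 * evenL2Norm r) * ∑ k ∈ P',
          (g k * Real.sqrt (Real.log (((|k| : ℤ) : ℝ) + Real.exp 1) ^ δ))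
          * Real.sqrt (((((N + 2 - |k| : ℤ)) : ℝ))⁻¹
            * (Real.log (((|k| : ℤ) : ℝ) + Real.exp 1) ^ δ)⁻¹)
        ≤ (2 * evenL2Norm r) * (evenLogNorm g δ * Real.sqrt (2 * (2 ^ δ * (2 * K)))) :=
          mul_le_mul_of_nonneg_left hfin (by linarith)
      _ = c₁ * evenL2Norm r * evenLogNorm g δ := by rw [hc₁]; ring
      _ ≤ (c₁ + c₂) * evenL2Norm r * evenLogNorm g δ := by
          have h9 : (0:ℝ) ≤ c₂ * evenL2Norm r * evenLogNorm g δ :=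
            mul_nonneg (mul_nonneg hc₂0.le hA0) hB0
          nlinarith [mul_nonneg hA0 hB0]
  · -- sigma2
    have hfnn : ∀ p : ℤ × ℤ, 0 ≤ (if Even p.1 ∧ Even p.2 ∧ N < |p.1| ∧ |p.2| ≤ N
        then r (p.2 + p.1) * g p.1 / ((|p.1 - p.2| : ℤ) : ℝ) else 0) := by
      intro p
      split
      · apply div_nonneg (mul_nonneg (hr0 _) (hg0 _)) (by exact_mod_cast abs_nonneg _)
      · exact le_rfl
    rw [sigma2]
    by_cases hsum : Summable (fun p : ℤ × ℤ => if Even p.1 ∧ Even p.2 ∧ N < |p.1| ∧ |p.2| ≤ N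
        then r (p.2 + p.1) * g p.1 / ((|p.1 - p.2| : ℤ) : ℝ) else 0)
    swap
    · rw [tsum_eq_zero_of_not_summable hsum]
      have : (0:ℝ) ≤ (c₁ + c₂) * evenL2Norm r := mul_nonneg (by linarith) hA0
      exact mul_nonneg this hB0
    apply Summable.tsum_le_of_sum_le hsum
    intro s
    set P := s.image Prod.fst with hPdef
    set Q := s.image Prod.snd with hQdef
    have hsub : s ⊆ P ×ˢ Q := by
      intro p hp
      rw [Finset.mem_product]
      exact ⟨Finset.mem_image_of_mem _ hp, Finset.mem_image_of_mem _ hp⟩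
    refine le_trans (Finset.sum_le_sum_of_subset_of_nonneg hsub (fun p _ _ => hfnn p)) ?_
    rw [Finset.sum_product]
    have hinner : ∀ k ∈ P, (∑ j ∈ Q, if Even (k, j).1 ∧ Even (k, j).2 ∧ N < |(k, j).1| ∧ |(k, j).2| ≤ N
          then r ((k, j).2 + (k, j).1) * g (k, j).1 / ((|(k, j).1 - (k, j).2| : ℤ) : ℝ) else 0)
        ≤ (if Even k ∧ N < |k|
          then g k * (evenL2Norm r * (2 * Real.sqrt ((((|k| - N : ℤ)) : ℝ))⁻¹)) else 0) := by
      intro k _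
      by_cases hk : Even k ∧ N < |k|
      · rw [if_pos hk]
        exact inner2 r g hg0 hr hN hN0 hk.1 hk.2 Q
      · rw [if_neg hk]
        apply le_of_eq
        apply Finset.sum_eq_zero
        intro j _
        rw [if_neg (by tauto)]
    refine le_trans (Finset.sum_le_sum hinner) ?_
    rw [← Finset.sum_filter]
    set P' := P.filter (fun k => Even k ∧ N < |k|) with hP'
    have hP'mem : ∀ k ∈ P', Even k ∧ N < |k| := fun k hk => (Finset.mem_filter.1 hk).2
    have ha : ∀ k ∈ P', (0:ℝ) < (((|k| - N : ℤ)) : ℝ) := by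
      intro k hk
      exact_mod_cast (by have := (hP'mem k hk).2; omega : (0:ℤ) < |k| - N)
    have hsum_eq : ∑ k ∈ P', g k * (evenL2Norm r * (2 * Real.sqrt ((((|k| - N : ℤ)) : ℝ))⁻¹))
        = (2 * evenL2Norm r) * ∑ k ∈ P',
            (g k * Real.sqrt (Real.log (((|k| : ℤ) : ℝ) + Real.exp 1) ^ δ))
            * Real.sqrt (((((|k| - N : ℤ)) : ℝ))⁻¹
              * (Real.log (((|k| : ℤ) : ℝ) + Real.exp 1) ^ δ)⁻¹) := by
      rw [Finset.mul_sum]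
      refine Finset.sum_congr rfl (fun k hk => ?_)
      have hwk := hw k
      have hak := ha k hk
      have hsq : Real.sqrt (Real.log (((|k| : ℤ) : ℝ) + Real.exp 1) ^ δ)
          * Real.sqrt (((((|k| - N : ℤ)) : ℝ))⁻¹
            * (Real.log (((|k| : ℤ) : ℝ) + Real.exp 1) ^ δ)⁻¹)
          = Real.sqrt ((((|k| - N : ℤ)) : ℝ))⁻¹ := by
        rw [← Real.sqrt_mul hwk.le]
        congr 1
        rw [mul_left_comm, mul_inv_cancel₀ hwk.ne', mul_one]
      rw [mul_assoc (g k), hsq]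
      rw [Real.sqrt_inv]
      ring
    rw [hsum_eq]
    have hCS := Real.sum_mul_le_sqrt_mul_sqrt P'
      (fun k => g k * Real.sqrt (Real.log (((|k| : ℤ) : ℝ) + Real.exp 1) ^ δ))
      (fun k => Real.sqrt (((((|k| - N : ℤ)) : ℝ))⁻¹
        * (Real.log (((|k| : ℤ) : ℝ) + Real.exp 1) ^ δ)⁻¹))
    have hu2 : ∑ k ∈ P', (g k * Real.sqrt (Real.log (((|k| : ℤ) : ℝ) + Real.exp 1) ^ δ)) ^ 2
        = ∑ k ∈ P', g k ^ 2 * Real.log (((|k| : ℤ) : ℝ) + Real.exp 1) ^ δ := by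
      refine Finset.sum_congr rfl (fun k hk => ?_)
      rw [mul_pow, Real.sq_sqrt (hw k).le]
    have hv2 : ∑ k ∈ P', (Real.sqrt (((((|k| - N : ℤ)) : ℝ))⁻¹
          * (Real.log (((|k| : ℤ) : ℝ) + Real.exp 1) ^ δ)⁻¹)) ^ 2
        = ∑ k ∈ P', ((((|k| - N : ℤ)) : ℝ))⁻¹
          * (Real.log (((|k| : ℤ) : ℝ) + Real.exp 1) ^ δ)⁻¹ := by
      refine Finset.sum_congr rfl (fun k hk => ?_)
      apply Real.sq_sqrt
      have := ha k hk
      have := hw k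
      positivity
    rw [hu2, hv2] at hCS
    have hBb : Real.sqrt (∑ k ∈ P', g k ^ 2 * Real.log (((|k| : ℤ) : ℝ) + Real.exp 1) ^ δ)
        ≤ evenLogNorm g δ := by
      have hle := sum_gw_le g hg P' (fun m hm => (hP'mem m hm).1)
      calc Real.sqrt (∑ k ∈ P', g k ^ 2 * Real.log (((|k| : ℤ) : ℝ) + Real.exp 1) ^ δ)
          ≤ Real.sqrt (evenLogNorm g δ ^ 2) := Real.sqrt_le_sqrt hle
        _ = evenLogNorm g δ := Real.sqrt_sq hB0
    have hΨ : ∑ k ∈ P', ((((|k| - N : ℤ)) : ℝ))⁻¹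
        * (Real.log (((|k| : ℤ) : ℝ) + Real.exp 1) ^ δ)⁻¹ ≤ 2 * K :=
      psi_full hδ hK hN0 hN P' (fun k hk => ⟨(hP'mem k hk).2, (hP'mem k hk).1⟩)
    have hΨb : Real.sqrt (∑ k ∈ P', ((((|k| - N : ℤ)) : ℝ))⁻¹
        * (Real.log (((|k| : ℤ) : ℝ) + Real.exp 1) ^ δ)⁻¹)
        ≤ Real.sqrt (2 * K) := Real.sqrt_le_sqrt hΨ
    have hfin : ∑ k ∈ P', (g k * Real.sqrt (Real.log (((|k| : ℤ) : ℝ) + Real.exp 1) ^ δ))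
          * Real.sqrt (((((|k| - N : ℤ)) : ℝ))⁻¹
            * (Real.log (((|k| : ℤ) : ℝ) + Real.exp 1) ^ δ)⁻¹)
        ≤ evenLogNorm g δ * Real.sqrt (2 * K) :=
      le_trans hCS (mul_le_mul hBb hΨb (Real.sqrt_nonneg _) hB0)
    calc (2 * evenL2Norm r) * ∑ k ∈ P',
          (g k * Real.sqrt (Real.log (((|k| : ℤ) : ℝ) + Real.exp 1) ^ δ))
          * Real.sqrt (((((|k| - N : ℤ)) : ℝ))⁻¹
            * (Real.log (((|k| : ℤ) : ℝ) + Real.exp 1) ^ δ)⁻¹)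
        ≤ (2 * evenL2Norm r) * (evenLogNorm g δ * Real.sqrt (2 * K)) :=
          mul_le_mul_of_nonneg_left hfin (by linarith)
      _ = c₂ * evenL2Norm r * evenLogNorm g δ := by rw [hc₂]; ring
      _ ≤ (c₁ + c₂) * evenL2Norm r * evenLogNorm g δ := by
          nlinarith [mul_nonneg hA0 hB0]
end

section
/- Let r : 2ℤ → [0,∞) satisfy Σ_{k∈2ℤ} r(k)² < ∞ and let m ∈ 2ℤ with m ≠ 0. Then Σ_{k∈2ℤ, k≠m} r(m+k)/|m−k| ≤ ‖r‖/√|m| + 2·𝓔_{|m|}(r). -/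
set_option maxHeartbeats 1000000

open Finset in
lemma natTailSummable (c : ℕ) :
    Summable (fun n : ℕ => if c ≤ n then ((n : ℝ) ^ 2)⁻¹ else 0) := by
  have base : Summable (fun n : ℕ => ((n : ℝ) ^ 2)⁻¹) :=
    Real.summable_nat_pow_inv.mpr (by norm_num)
  refine base.of_nonneg_of_le (fun n => ?_) (fun n => ?_)
  · split <;> positivity
  · split
    · exact le_rfl
    · positivity

open Finset in
lemma natTailBound (c : ℕ) (hc : 2 ≤ c) :
    ∑' n : ℕ, (if c ≤ n then ((n : ℝ) ^ 2)⁻¹ else 0) ≤ ((c : ℝ) - 1)⁻¹ := by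
  apply Real.tsum_le_of_sum_range_le
  · intro n; split <;> positivity
  · intro n
    have key : ∀ N : ℕ, ∑ i ∈ range N, (if c ≤ i then ((i : ℝ) ^ 2)⁻¹ else 0)
        ≤ ((c : ℝ) - 1)⁻¹ - (((max N c : ℕ) : ℝ) - 1)⁻¹ := by
      intro N
      induction N with
      | zero => simp [Nat.max_eq_right (Nat.zero_le c)]
      | succ N ih =>
        rw [sum_range_succ]
        by_cases h : c ≤ N
        · have h2 : (2 : ℝ) ≤ (N : ℝ) := by exact_mod_cast hc.trans h
          have hmax1 : max N c = N := Nat.max_eq_left h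
          have hmax2 : max (N + 1) c = N + 1 := Nat.max_eq_left (h.trans (Nat.le_succ N))
          rw [hmax1] at ih
          rw [if_pos h, hmax2]
          have hstep : ((N : ℝ) ^ 2)⁻¹ ≤ ((N : ℝ) - 1)⁻¹ - ((N : ℝ))⁻¹ := by
            rw [inv_sub_inv (by nlinarith) (by nlinarith)]
            rw [div_eq_mul_inv]
            have h3 : (N : ℝ) - ((N : ℝ) - 1) = 1 := by ring
            rw [h3, one_mul]
            apply inv_anti₀ (by nlinarith)
            nlinarith
          have h4 : ((N + 1 : ℕ) : ℝ) - 1 = (N : ℝ) := by push_cast; ring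
          rw [h4]
          linarith
        · have hmax1 : max N c = c := Nat.max_eq_right (le_of_not_ge h)
          have hmax2 : max (N + 1) c = c := Nat.max_eq_right (by omega)
          rw [hmax1] at ih
          rw [if_neg h, hmax2]
          linarith
    have := key n
    have hpos : (0:ℝ) ≤ (((max n c : ℕ) : ℝ) - 1)⁻¹ := by
      have h5 : (2:ℝ) ≤ ((max n c : ℕ) : ℝ) := by exact_mod_cast hc.trans (Nat.le_max_right n c)
      exact inv_nonneg.mpr (by linarith)
    linarith

lemma intTailHalf1 (c : ℕ) :
    (fun n : ℕ => if (c : ℤ) ≤ |(n : ℤ)| then (((n : ℤ) : ℝ) ^ 2)⁻¹ else 0)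
      = fun n : ℕ => if c ≤ n then ((n : ℝ) ^ 2)⁻¹ else 0 := by
  funext n
  simp [Int.abs_natCast]

lemma intTailHalf2 (c : ℕ) :
    (fun n : ℕ => if (c : ℤ) ≤ |(-(n + 1) : ℤ)| then (((-(n + 1) : ℤ) : ℝ) ^ 2)⁻¹ else 0)
      = fun n : ℕ => if c ≤ n + 1 then (((n : ℝ) + 1) ^ 2)⁻¹ else 0 := by
  funext n
  have h1 : ((c : ℤ) ≤ |(-(n + 1) : ℤ)|) ↔ c ≤ n + 1 := by
    rw [abs_neg, abs_of_nonneg (by positivity)]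
    omega
  simp only [h1]
  split
  · push_cast; ring_nf
  · rfl

lemma intTailSummable (c : ℕ) :
    Summable (fun t : ℤ => if (c : ℤ) ≤ |t| then ((t : ℝ) ^ 2)⁻¹ else 0) := by
  apply Summable.of_nat_of_neg_add_one
  · rw [intTailHalf1]; exact natTailSummable c
  · rw [intTailHalf2]
    apply ((natTailSummable c).comp_injective (add_left_injective 1)).congr
    intro n
    norm_num

lemma intTailBound (c : ℕ) (hc : 2 ≤ c) :
    ∑' t : ℤ, (if (c : ℤ) ≤ |t| then ((t : ℝ) ^ 2)⁻¹ else 0) ≤ 2 * ((c : ℝ) - 1)⁻¹ := by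
  have h1 : Summable (fun n : ℕ => if (c : ℤ) ≤ |(n : ℤ)| then (((n : ℤ) : ℝ) ^ 2)⁻¹ else 0) := by
    rw [intTailHalf1]; exact natTailSummable c
  have h2 : Summable (fun n : ℕ =>
      if (c : ℤ) ≤ |(-(n + 1) : ℤ)| then (((-(n + 1) : ℤ) : ℝ) ^ 2)⁻¹ else 0) := by
    rw [intTailHalf2]
    apply ((natTailSummable c).comp_injective (add_left_injective 1)).congr
    intro n; norm_num
  rw [tsum_of_nat_of_neg_add_one (f := fun t : ℤ => if (c : ℤ) ≤ |t| then ((t : ℝ) ^ 2)⁻¹ else 0) h1 h2]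
  have b1 : ∑' n : ℕ, (if (c : ℤ) ≤ |(n : ℤ)| then (((n : ℤ) : ℝ) ^ 2)⁻¹ else 0)
      ≤ ((c : ℝ) - 1)⁻¹ := by
    rw [intTailHalf1]; exact natTailBound c hc
  have b2 : ∑' n : ℕ, (if (c : ℤ) ≤ |(-(n + 1) : ℤ)| then (((-(n + 1) : ℤ) : ℝ) ^ 2)⁻¹ else 0)
      ≤ ((c : ℝ) - 1)⁻¹ := by
    rw [intTailHalf2]
    have h3 := Summable.tsum_eq_zero_add (natTailSummable c)
    have h4 : (if c ≤ (0 : ℕ) then (((0 : ℕ) : ℝ) ^ 2)⁻¹ else 0) = 0 := by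
      rw [if_neg (by omega)]
    rw [h4, zero_add] at h3
    have h5 : ∑' n : ℕ, (if c ≤ n + 1 then (((n : ℝ) + 1) ^ 2)⁻¹ else 0)
        = ∑' n : ℕ, (if c ≤ n + 1 then (((n + 1 : ℕ) : ℝ) ^ 2)⁻¹ else 0) := by
      apply tsum_congr; intro n; norm_num
    rw [h5, ← h3]
    exact natTailBound c hc
  linarith

lemma summable_mul_of_sq {f g : ℤ → ℝ}
    (hf2 : Summable fun i => f i ^ 2) (hg2 : Summable fun i => g i ^ 2) :
    Summable fun i => f i * g i := by
  apply Summable.of_abs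
  apply Summable.of_nonneg_of_le (fun i => abs_nonneg _)
    (fun i => ?_) (((hf2.add hg2).div_const 2))
  rw [abs_mul]
  have h := sq_nonneg (|f i| - |g i|)
  have h1 : |f i| ^ 2 = f i ^ 2 := sq_abs _
  have h2 : |g i| ^ 2 = g i ^ 2 := sq_abs _
  nlinarith [abs_nonneg (f i), abs_nonneg (g i)]

lemma tsum_mul_le_sqrt {f g : ℤ → ℝ} (hf : ∀ i, 0 ≤ f i) (hg : ∀ i, 0 ≤ g i)
    (hf2 : Summable fun i => f i ^ 2) (hg2 : Summable fun i => g i ^ 2) :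
    ∑' i, f i * g i ≤ Real.sqrt (∑' i, f i ^ 2) * Real.sqrt (∑' i, g i ^ 2) := by
  apply Summable.tsum_le_of_sum_le (summable_mul_of_sq hf2 hg2)
  intro s
  have hcs := Finset.sum_mul_sq_le_sq_mul_sq s f g
  have hnn : 0 ≤ ∑ i ∈ s, f i * g i :=
    Finset.sum_nonneg fun i _ => mul_nonneg (hf i) (hg i)
  have step1 : ∑ i ∈ s, f i * g i
      ≤ Real.sqrt ((∑ i ∈ s, f i ^ 2) * ∑ i ∈ s, g i ^ 2) := by
    rw [← Real.sqrt_sq hnn]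
    exact Real.sqrt_le_sqrt hcs
  have hfs : ∑ i ∈ s, f i ^ 2 ≤ ∑' i, f i ^ 2 :=
    Summable.sum_le_tsum s (fun i _ => sq_nonneg _) hf2
  have hgs : ∑ i ∈ s, g i ^ 2 ≤ ∑' i, g i ^ 2 :=
    Summable.sum_le_tsum s (fun i _ => sq_nonneg _) hg2
  calc ∑ i ∈ s, f i * g i ≤ Real.sqrt ((∑ i ∈ s, f i ^ 2) * ∑ i ∈ s, g i ^ 2) := step1
    _ ≤ Real.sqrt ((∑' i, f i ^ 2) * ∑' i, g i ^ 2) := by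
        apply Real.sqrt_le_sqrt
        apply mul_le_mul hfs hgs (Finset.sum_nonneg fun i _ => sq_nonneg _)
          ((Finset.sum_nonneg fun i _ => sq_nonneg _).trans hfs)
    _ = Real.sqrt (∑' i, f i ^ 2) * Real.sqrt (∑' i, g i ^ 2) :=
        Real.sqrt_mul (tsum_nonneg fun i => sq_nonneg _) _



/-- `𝓔_m(x) = (Σ_{j∈2ℤ, |j|≥m} x(j)²)^{1/2}`. -/
noncomputable def evenTail (x : ℤ → ℝ) (m : ℤ) : ℝ :=
  Real.sqrt (∑' j : ℤ, if Even j ∧ m ≤ |j| then x j ^ 2 else 0)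

/-- For a nonnegative square-summable `r : 2ℤ → [0,∞)` and even `m ≠ 0`,
`Σ_{k∈2ℤ, k≠m} r(m+k)/|m−k| ≤ ‖r‖/√|m| + 2·𝓔_{|m|}(r)`. -/
theorem stmt9 (r : ℤ → ℝ) (hr : ∀ k, 0 ≤ r k)
    (hr2 : Summable fun k : ℤ => if Even k then r k ^ 2 else 0)
    (m : ℤ) (hm : Even m) (hm0 : m ≠ 0) :
    (∑' k : ℤ, if Even k ∧ k ≠ m then r (m + k) / (|m - k| : ℤ) else 0) ≤
      evenL2Norm r / Real.sqrt |(m : ℝ)| + 2 * evenTail r |m| := by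
  classical
  -- arithmetic setup
  obtain ⟨Mz, hMz⟩ : ∃ Mz : ℤ, |m| = Mz + Mz := by
    obtain ⟨a, ha⟩ := hm
    rcases abs_choice m with h | h
    · exact ⟨a, by omega⟩
    · exact ⟨-a, by omega⟩
  have hMz1 : 1 ≤ Mz := by have := abs_pos.mpr hm0; omega
  set Mn : ℕ := Mz.toNat with hMndef
  have hMnz : (Mn : ℤ) = Mz := Int.toNat_of_nonneg (by omega)
  have hMn1 : 1 ≤ Mn := by omega
  set c : ℕ := Mn + 1 with hcdef
  have hc2 : 2 ≤ c := by omega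
  set c' : ℕ := 2 * Mn + 2 with hc'def
  -- the four pieces
  set f₁ : ℤ → ℝ := fun k => if Even k ∧ k ≠ m ∧ |m + k| < |m| then r (m + k) else 0 with hf₁
  set g₁ : ℤ → ℝ := fun k =>
    if Even k ∧ k ≠ m ∧ |m + k| < |m| then |((m - k : ℤ) : ℝ)|⁻¹ else 0 with hg₁
  set f₂ : ℤ → ℝ := fun k => if Even k ∧ k ≠ m ∧ |m| ≤ |m + k| then r (m + k) else 0 with hf₂
  set g₂ : ℤ → ℝ := fun k =>
    if Even k ∧ k ≠ m ∧ |m| ≤ |m + k| then |((m - k : ℤ) : ℝ)|⁻¹ else 0 with hg₂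
  have hf₁nn : ∀ k, 0 ≤ f₁ k := by intro k; rw [hf₁]; dsimp only; split; exacts [hr _, le_rfl]
  have hf₂nn : ∀ k, 0 ≤ f₂ k := by intro k; rw [hf₂]; dsimp only; split; exacts [hr _, le_rfl]
  have hg₁nn : ∀ k, 0 ≤ g₁ k := by
    intro k; rw [hg₁]; dsimp only; split; exacts [inv_nonneg.mpr (abs_nonneg _), le_rfl]
  have hg₂nn : ∀ k, 0 ≤ g₂ k := by
    intro k; rw [hg₂]; dsimp only; split; exacts [inv_nonneg.mpr (abs_nonneg _), le_rfl]
  -- pointwise splitting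
  have hsplit : ∀ k : ℤ, (if Even k ∧ k ≠ m then r (m + k) / ((|m - k| : ℤ) : ℝ) else 0)
      = f₁ k * g₁ k + f₂ k * g₂ k := by
    intro k
    rw [hf₁, hg₁, hf₂, hg₂]; dsimp only
    by_cases h1 : Even k ∧ k ≠ m
    · by_cases h2 : |m + k| < |m|
      · have c1 : Even k ∧ k ≠ m ∧ |m + k| < |m| := ⟨h1.1, h1.2, h2⟩
        have c2 : ¬(Even k ∧ k ≠ m ∧ |m| ≤ |m + k|) := by
          rintro ⟨-, -, hh⟩; exact absurd hh (not_le.mpr h2)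
        rw [if_pos h1, if_pos c1, if_pos c1, if_neg c2, if_neg c2,
          Int.cast_abs, div_eq_mul_inv]
        ring
      · have c1 : ¬(Even k ∧ k ≠ m ∧ |m + k| < |m|) := by
          rintro ⟨-, -, hh⟩; exact h2 hh
        have c2 : Even k ∧ k ≠ m ∧ |m| ≤ |m + k| := ⟨h1.1, h1.2, not_lt.mp h2⟩
        rw [if_pos h1, if_neg c1, if_neg c1, if_pos c2, if_pos c2,
          Int.cast_abs, div_eq_mul_inv]
        ring
    · have c1 : ¬(Even k ∧ k ≠ m ∧ |m + k| < |m|) := fun h => h1 ⟨h.1, h.2.1⟩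
      have c2 : ¬(Even k ∧ k ≠ m ∧ |m| ≤ |m + k|) := fun h => h1 ⟨h.1, h.2.1⟩
      rw [if_neg h1, if_neg c1, if_neg c1, if_neg c2, if_neg c2]
      ring
  -- summability of shifted squares
  have hshift : Summable (fun k : ℤ => if Even (m + k) then r (m + k) ^ 2 else 0) := by
    have h := (Equiv.addLeft m).summable_iff.mpr hr2
    exact h.congr fun k => rfl
  have hb₁ : ∀ k : ℤ, f₁ k ^ 2 ≤ (if Even (m + k) then r (m + k) ^ 2 else 0) := by
    intro k
    rw [hf₁]; dsimp only
    by_cases h : Even k ∧ k ≠ m ∧ |m + k| < |m|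
    · rw [if_pos h, if_pos (hm.add h.1)]
    · rw [if_neg h]
      split <;> norm_num [sq_nonneg]
  have hb₂ : ∀ k : ℤ, f₂ k ^ 2 ≤ (if Even (m + k) ∧ |m| ≤ |m + k| then r (m + k) ^ 2 else 0) := by
    intro k
    rw [hf₂]; dsimp only
    by_cases h : Even k ∧ k ≠ m ∧ |m| ≤ |m + k|
    · rw [if_pos h, if_pos ⟨hm.add h.1, h.2.2⟩]
    · rw [if_neg h]
      split <;> norm_num [sq_nonneg]
  have hB₂sum : Summable (fun k : ℤ => if Even (m + k) ∧ |m| ≤ |m + k| then r (m + k) ^ 2 else 0) := by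
    apply Summable.of_nonneg_of_le (fun k => ?_) (fun k => ?_) hshift
    · split <;> [exact sq_nonneg _; exact le_rfl]
    · by_cases h : Even (m + k) ∧ |m| ≤ |m + k|
      · rw [if_pos h, if_pos h.1]
      · rw [if_neg h]
        split <;> norm_num [sq_nonneg]
  -- region 1 : f₁
  have hf₁2 : Summable (fun k => f₁ k ^ 2) :=
    Summable.of_nonneg_of_le (fun k => sq_nonneg _) hb₁ hshift
  have hf₁2le : ∑' k, f₁ k ^ 2 ≤ ∑' j : ℤ, (if Even j then r j ^ 2 else 0) := by
    have e1 : ∑' k : ℤ, (if Even (m + k) then r (m + k) ^ 2 else 0)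
        = ∑' j : ℤ, (if Even j then r j ^ 2 else 0) :=
      Equiv.tsum_eq (Equiv.addLeft m) (fun j : ℤ => if Even j then r j ^ 2 else 0)
    exact le_trans (Summable.tsum_le_tsum hb₁ hf₁2 hshift) (le_of_eq e1)
  -- region 2 : f₂
  have hf₂2 : Summable (fun k => f₂ k ^ 2) :=
    Summable.of_nonneg_of_le (fun k => sq_nonneg _) hb₂ hB₂sum
  have hf₂2le : ∑' k, f₂ k ^ 2 ≤ ∑' j : ℤ, (if Even j ∧ |m| ≤ |j| then r j ^ 2 else 0) := by
    have e1 : ∑' k : ℤ, (if Even (m + k) ∧ |m| ≤ |m + k| then r (m + k) ^ 2 else 0)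
        = ∑' j : ℤ, (if Even j ∧ |m| ≤ |j| then r j ^ 2 else 0) :=
      Equiv.tsum_eq (Equiv.addLeft m) (fun j : ℤ => if Even j ∧ |m| ≤ |j| then r j ^ 2 else 0)
    exact le_trans (Summable.tsum_le_tsum hb₂ hf₂2 hB₂sum) (le_of_eq e1)
  -- region 1 : g₁
  -- the Φ/Ge machinery for g₁
  have hc'z : (c' : ℤ) = 2 * Mz + 2 := by rw [hc'def]; push_cast; omega
  have hcz : (c : ℤ) = Mz + 1 := by rw [hcdef]; push_cast; omega
  set Φ : ℤ → ℝ := fun t =>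
    if Even (m - t) ∧ m - t ≠ m ∧ |m + (m - t)| < |m| then ((t : ℝ) ^ 2)⁻¹ else 0 with hΦ
  set Ge : ℤ → ℝ := fun t => if Even t ∧ (c' : ℤ) ≤ |t| then ((t : ℝ) ^ 2)⁻¹ else 0 with hGe
  have hg1Φ : ∀ k : ℤ, g₁ k ^ 2 = Φ (m - k) := by
    intro k
    rw [hg₁, hΦ]; dsimp only
    rw [sub_sub_cancel]
    by_cases h : Even k ∧ k ≠ m ∧ |m + k| < |m|
    · rw [if_pos h, if_pos h, inv_pow, sq_abs]
    · rw [if_neg h, if_neg h]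
      norm_num
  have hΦle : ∀ t, Φ t ≤ Ge t := by
    intro t
    rw [hΦ, hGe]; dsimp only
    by_cases h : Even (m - t) ∧ m - t ≠ m ∧ |m + (m - t)| < |m|
    · obtain ⟨he, hne, hlt⟩ := h
      have het : Even t := by
        obtain ⟨a, ha⟩ := hm
        obtain ⟨b, hb⟩ := he
        exact ⟨a - b, by omega⟩
      have habs : (c' : ℤ) ≤ |t| := by
        have h1 : |2 * m| - |2 * m - t| ≤ |2 * m - (2 * m - t)| := abs_sub_abs_le_abs_sub _ _
        have h2 : 2 * m - (2 * m - t) = t := by ring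
        have h3 : |2 * m| = 2 * |m| := by rw [abs_mul]; norm_num
        have h4 : m + (m - t) = 2 * m - t := by ring
        rw [h4] at hlt
        rw [h2, h3] at h1
        obtain ⟨v, hv⟩ : ∃ v, |t| = v + v := by
          obtain ⟨u, hu⟩ := het
          rcases abs_choice t with hh | hh
          · exact ⟨u, by omega⟩
          · exact ⟨-u, by omega⟩
        have hA : Mz + Mz + 1 ≤ |t| := by
          rw [hMz] at h1 hlt; linarith
        rw [hc'z, hv]; rw [hv] at hA; omega
      rw [if_pos ⟨he, hne, hlt⟩, if_pos ⟨het, habs⟩]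
    · rw [if_neg h]
      split <;> positivity
  have hGele : ∀ t, Ge t ≤ (if (c' : ℤ) ≤ |t| then ((t : ℝ) ^ 2)⁻¹ else 0) := by
    intro t
    rw [hGe]; dsimp only
    by_cases h : Even t ∧ (c' : ℤ) ≤ |t|
    · rw [if_pos h, if_pos h.2]
    · rw [if_neg h]
      split <;> positivity
  have hGenn : ∀ t, 0 ≤ Ge t := by
    intro t; rw [hGe]; dsimp only; split <;> positivity
  have hΦnn : ∀ t, 0 ≤ Φ t := by
    intro t; rw [hΦ]; dsimp only; split <;> positivity
  have hGesum : Summable Ge :=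
    Summable.of_nonneg_of_le hGenn hGele (intTailSummable c')
  have hΦsum : Summable Φ := Summable.of_nonneg_of_le hΦnn hΦle hGesum
  have hg₁2 : Summable (fun k => g₁ k ^ 2) := by
    have h := (Equiv.subLeft m).summable_iff.mpr hΦsum
    exact (h.congr fun k => rfl).congr fun k => (hg1Φ k).symm
  have hinj : Function.Injective (fun s : ℤ => 2 * s) := fun a b h => by
    dsimp only at h; omega
  have hsupp : Function.support Ge ⊆ Set.range (fun s : ℤ => 2 * s) := by
    intro x hx
    rw [Function.mem_support, hGe] at hx
    dsimp only at hx
    by_cases h : Even x ∧ (c' : ℤ) ≤ |x|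
    · obtain ⟨⟨u, hu⟩, -⟩ := h
      exact ⟨u, by show 2 * u = x; omega⟩
    · exact absurd (if_neg h) hx
  have hGe2 : ∀ s : ℤ, Ge (2 * s)
      = 4⁻¹ * (if (c : ℤ) ≤ |s| then ((s : ℝ) ^ 2)⁻¹ else 0) := by
    intro s
    rw [hGe]; dsimp only
    have habs2 : |2 * s| = 2 * |s| := by rw [abs_mul]; norm_num
    by_cases h : (c : ℤ) ≤ |s|
    · have hcond : Even (2 * s) ∧ (c' : ℤ) ≤ |2 * s| := by
        refine ⟨⟨s, two_mul s⟩, ?_⟩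
        rw [habs2, hc'z]; rw [hcz] at h; linarith
      rw [if_pos h, if_pos hcond]
      push_cast
      rw [mul_pow, mul_inv]
      norm_num
    · rw [if_neg h, if_neg, mul_zero]
      rintro ⟨-, hh⟩
      apply h
      rw [habs2, hc'z] at hh; rw [hcz]; linarith
  have hg₁2le : ∑' k, g₁ k ^ 2 ≤ ((|m| : ℤ) : ℝ)⁻¹ := by
    have e1 : ∑' k, g₁ k ^ 2 = ∑' t, Φ t := by
      rw [tsum_congr hg1Φ]
      exact Equiv.tsum_eq (Equiv.subLeft m) Φ
    have e2 : ∑' t, Ge t = 4⁻¹ * ∑' s : ℤ, (if (c : ℤ) ≤ |s| then ((s : ℝ) ^ 2)⁻¹ else 0) := by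
      rw [← Function.Injective.tsum_eq hinj hsupp, tsum_congr hGe2, tsum_mul_left]
    have e3 : ((|m| : ℤ) : ℝ) = 2 * (Mn : ℝ) := by
      have : |m| = 2 * (Mn : ℤ) := by omega
      rw [this]; push_cast; ring
    have hMnR : (1 : ℝ) ≤ (Mn : ℝ) := by exact_mod_cast hMn1
    have hcR : ((c : ℝ) - 1) = (Mn : ℝ) := by rw [hcdef]; push_cast; ring
    calc ∑' k, g₁ k ^ 2 = ∑' t, Φ t := e1
      _ ≤ ∑' t, Ge t := Summable.tsum_le_tsum hΦle hΦsum hGesum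
      _ = 4⁻¹ * ∑' s : ℤ, (if (c : ℤ) ≤ |s| then ((s : ℝ) ^ 2)⁻¹ else 0) := e2
      _ ≤ 4⁻¹ * (2 * ((c : ℝ) - 1)⁻¹) := by
          have h := intTailBound c hc2
          linarith
      _ = ((|m| : ℤ) : ℝ)⁻¹ := by
          rw [hcR, e3]
          rw [mul_inv]
          field_simp
          ring
  -- region 2 : g₂
  -- the Ψ machinery for g₂
  set Ψ : ℤ → ℝ := fun t =>
    if Even (m - t) ∧ m - t ≠ m ∧ |m| ≤ |m + (m - t)| then ((t : ℝ) ^ 2)⁻¹ else 0 with hΨ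
  have hg2Ψ : ∀ k : ℤ, g₂ k ^ 2 = Ψ (m - k) := by
    intro k
    rw [hg₂, hΨ]; dsimp only
    rw [sub_sub_cancel]
    by_cases h : Even k ∧ k ≠ m ∧ |m| ≤ |m + k|
    · rw [if_pos h, if_pos h, inv_pow, sq_abs]
    · rw [if_neg h, if_neg h]
      norm_num
  have hΨle : ∀ t, Ψ t ≤ (if ((2 : ℕ) : ℤ) ≤ |t| then ((t : ℝ) ^ 2)⁻¹ else 0) := by
    intro t
    rw [hΨ]; dsimp only
    by_cases h : Even (m - t) ∧ m - t ≠ m ∧ |m| ≤ |m + (m - t)|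
    · obtain ⟨he, hne, hge⟩ := h
      have het : Even t := by
        obtain ⟨a, ha⟩ := hm
        obtain ⟨b, hb⟩ := he
        exact ⟨a - b, by omega⟩
      have ht0 : t ≠ 0 := fun hh => hne (by rw [hh, sub_zero])
      have habs : ((2 : ℕ) : ℤ) ≤ |t| := by
        obtain ⟨v, hv⟩ : ∃ v, |t| = v + v := by
          obtain ⟨u, hu⟩ := het
          rcases abs_choice t with hh | hh
          · exact ⟨u, by omega⟩
          · exact ⟨-u, by omega⟩
        have h1 : 1 ≤ |t| := Int.one_le_abs (by omega)
        push_cast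
        rw [hv] at h1 ⊢
        omega
      rw [if_pos ⟨he, hne, hge⟩, if_pos habs]
    · rw [if_neg h]
      split <;> positivity
  have hΨnn : ∀ t, 0 ≤ Ψ t := by
    intro t; rw [hΨ]; dsimp only; split <;> positivity
  have hΨsum : Summable Ψ := Summable.of_nonneg_of_le hΨnn hΨle (intTailSummable 2)
  have hg₂2 : Summable (fun k => g₂ k ^ 2) := by
    have h := (Equiv.subLeft m).summable_iff.mpr hΨsum
    exact (h.congr fun k => rfl).congr fun k => (hg2Ψ k).symm
  have hg₂2le : ∑' k, g₂ k ^ 2 ≤ 2 := by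
    have e1 : ∑' k, g₂ k ^ 2 = ∑' t, Ψ t := by
      rw [tsum_congr hg2Ψ]
      exact Equiv.tsum_eq (Equiv.subLeft m) Ψ
    have h2 := intTailBound 2 le_rfl
    calc ∑' k, g₂ k ^ 2 = ∑' t, Ψ t := e1
      _ ≤ ∑' t : ℤ, (if ((2 : ℕ) : ℤ) ≤ |t| then ((t : ℝ) ^ 2)⁻¹ else 0) :=
          Summable.tsum_le_tsum hΨle hΨsum (intTailSummable 2)
      _ ≤ 2 * (((2 : ℕ) : ℝ) - 1)⁻¹ := h2
      _ = 2 := by norm_num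
  -- assemble
  have hS1 : Summable (fun k => f₁ k * g₁ k) := summable_mul_of_sq hf₁2 hg₁2
  have hS2 : Summable (fun k => f₂ k * g₂ k) := summable_mul_of_sq hf₂2 hg₂2
  rw [tsum_congr hsplit, Summable.tsum_add hS1 hS2]
  have hA : ∑' k, f₁ k * g₁ k ≤ evenL2Norm r / Real.sqrt |(m : ℝ)| := by
    have h1 := tsum_mul_le_sqrt hf₁nn hg₁nn hf₁2 hg₁2
    have h2 : Real.sqrt (∑' k, f₁ k ^ 2) ≤ evenL2Norm r := by
      rw [evenL2Norm]; exact Real.sqrt_le_sqrt hf₁2le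
    have h3 : Real.sqrt (∑' k, g₁ k ^ 2) ≤ (Real.sqrt |(m : ℝ)|)⁻¹ := by
      have h4 : ((|m| : ℤ) : ℝ) = |(m : ℝ)| := by push_cast; rfl
      rw [← Real.sqrt_inv, ← h4]
      exact Real.sqrt_le_sqrt hg₁2le
    calc ∑' k, f₁ k * g₁ k
        ≤ Real.sqrt (∑' k, f₁ k ^ 2) * Real.sqrt (∑' k, g₁ k ^ 2) := h1
      _ ≤ evenL2Norm r * (Real.sqrt |(m : ℝ)|)⁻¹ := by
          apply mul_le_mul h2 h3 (Real.sqrt_nonneg _)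
            ((Real.sqrt_nonneg _).trans h2)
      _ = evenL2Norm r / Real.sqrt |(m : ℝ)| := (div_eq_mul_inv _ _).symm
  have hB : ∑' k, f₂ k * g₂ k ≤ 2 * evenTail r |m| := by
    have h1 := tsum_mul_le_sqrt hf₂nn hg₂nn hf₂2 hg₂2
    have h2 : Real.sqrt (∑' k, f₂ k ^ 2) ≤ evenTail r |m| := by
      rw [evenTail]; exact Real.sqrt_le_sqrt hf₂2le
    have h3 : Real.sqrt (∑' k, g₂ k ^ 2) ≤ 2 := by
      calc Real.sqrt (∑' k, g₂ k ^ 2) ≤ Real.sqrt 2 := Real.sqrt_le_sqrt hg₂2le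
        _ ≤ 2 := by
            nlinarith [Real.sq_sqrt (by norm_num : (0:ℝ) ≤ 2), Real.sqrt_nonneg 2]
    calc ∑' k, f₂ k * g₂ k
        ≤ Real.sqrt (∑' k, f₂ k ^ 2) * Real.sqrt (∑' k, g₂ k ^ 2) := h1
      _ ≤ evenTail r |m| * 2 := by
          apply mul_le_mul h2 h3 (Real.sqrt_nonneg _) ((Real.sqrt_nonneg _).trans h2)
      _ = 2 * evenTail r |m| := mul_comm _ _
  exact add_le_add hA hB
end

section
/- Let Ω : ℤ → (0,∞) be a weight satisfying conditions (a0), (a2) and (a3). Then sup_{m∈ℤ} Σ_{k∈ℤ} Ω(m)²/(Ω(k)²·(1+(m−k)²)) < ∞. -/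
/-- If a weight `Ω : ℤ → (0,∞)` satisfies (a0) (`Ω(0) ≥ 1`, symmetry,
monotonicity on `k ≥ 0`), (a2) (`Ω(2k) ≤ C·Ω(k)`) and (a3) (`Ω(k) ≤ C·√(1+|k|)`), then
`sup_m Σ_k Ω(m)²/(Ω(k)²·(1+(m−k)²)) < ∞`. -/
theorem stmt14 (Ω : ℤ → ℝ) (hpos : ∀ k, 0 < Ω k)
    (ha0₁ : 1 ≤ Ω 0) (ha0₂ : ∀ k, Ω (-k) = Ω k) (ha0₃ : ∀ k : ℤ, 0 ≤ k → Ω k ≤ Ω (k + 1))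
    (ha2 : ∃ C > 0, ∀ k : ℤ, Ω (2 * k) ≤ C * Ω k)
    (ha3 : ∃ C > 0, ∀ k : ℤ, Ω k ≤ C * Real.sqrt (1 + |(k : ℝ)|)) :
    ∃ S : ℝ, ∀ m : ℤ,
      (Summable fun k : ℤ => Ω m ^ 2 / (Ω k ^ 2 * (1 + ((m : ℝ) - k) ^ 2))) ∧
      (∑' k : ℤ, Ω m ^ 2 / (Ω k ^ 2 * (1 + ((m : ℝ) - k) ^ 2))) ≤ S := by
  obtain ⟨C, hC, hC2⟩ := ha2
  obtain ⟨C3, hC3, hC3'⟩ := ha3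
  -- monotonicity on nonnegative integers
  have mono : ∀ a b : ℤ, 0 ≤ a → a ≤ b → Ω a ≤ Ω b := by
    intro a b ha hab
    exact Int.le_induction (motive := fun b _ => Ω a ≤ Ω b) le_rfl
      (fun n hn ih => ih.trans (ha0₃ n (ha.trans hn))) b hab
  have habs : ∀ k : ℤ, Ω k = Ω |k| := by
    intro k
    rcases abs_choice k with h | h
    · rw [h]
    · rw [h, ha0₂]
  have hone : ∀ k, 1 ≤ Ω k := by
    intro k
    rw [habs k]
    exact le_trans ha0₁ (mono 0 |k| le_rfl (abs_nonneg k))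
  have hdoub : ∀ m k : ℤ, |m| ≤ 2 * |k| → Ω m ≤ C * Ω k := by
    intro m k h
    rw [habs m, habs k]
    calc Ω |m| ≤ Ω (2 * |k|) := mono _ _ (abs_nonneg m) h
    _ ≤ C * Ω |k| := hC2 |k|
  have ha3' : ∀ m : ℤ, Ω m ^ 2 ≤ C3 ^ 2 * (1 + |(m : ℝ)|) := by
    intro m
    have h1 : (0:ℝ) ≤ 1 + |(m:ℝ)| := by positivity
    calc Ω m ^ 2 ≤ (C3 * Real.sqrt (1 + |(m:ℝ)|)) ^ 2 := by
          apply pow_le_pow_left₀ (hpos m).le (hC3' m)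
    _ = C3 ^ 2 * (1 + |(m:ℝ)|) := by
          rw [mul_pow, Real.sq_sqrt h1]
  -- summability of 1/(1+j^2) over ℤ
  have hG : Summable (fun j : ℤ => 1 / (1 + (j : ℝ) ^ 2)) := by
    apply Summable.of_norm_bounded_eventually (g := fun j : ℤ => 1 / (j : ℝ) ^ 2)
      (Real.summable_one_div_int_pow.mpr one_lt_two)
    filter_upwards [Filter.eventually_cofinite_ne (0 : ℤ)] with j hj
    have hj' : (0:ℝ) < (j:ℝ) ^ 2 := by
      have : (j:ℝ) ≠ 0 := Int.cast_ne_zero.mpr hj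
      positivity
    rw [Real.norm_eq_abs, abs_of_nonneg (by positivity)]
    apply div_le_div_of_nonneg_left one_pos.le hj'
    linarith
  set T : ℝ := ∑' j : ℤ, 1 / (1 + (j : ℝ) ^ 2) with hT
  refine ⟨16 * C3 ^ 2 + C ^ 2 * T, fun m => ?_⟩
  set s : Finset ℤ := Finset.Icc (-|m|) |m| with hs
  set Bm : ℝ := C3 ^ 2 * (1 + |(m:ℝ)|) / ((1 + (m:ℝ) ^ 2) / 4) with hBm
  have hBm0 : 0 ≤ Bm := by positivity
  -- pointwise bound
  have key : ∀ k : ℤ, Ω m ^ 2 / (Ω k ^ 2 * (1 + ((m : ℝ) - k) ^ 2)) ≤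
      (if k ∈ s then Bm else 0) + C ^ 2 * (1 / (1 + ((m : ℝ) - k) ^ 2)) := by
    intro k
    have hden : (0:ℝ) < 1 + ((m:ℝ) - k) ^ 2 := by positivity
    by_cases hcase : 2 * |k| < |m|
    · -- k small: use a3 bound
      have hks : k ∈ s := by
        simp only [hs, Finset.mem_Icc]
        constructor <;> nlinarith [le_abs_self k, neg_abs_le k, abs_nonneg k]
      rw [if_pos hks]
      have hkr : 2 * |(k:ℝ)| ≤ |(m:ℝ)| := by
        have : (2 * |k| : ℤ) ≤ |m| := le_of_lt hcase
        calc 2 * |(k:ℝ)| = ((2 * |k| : ℤ) : ℝ) := by push_cast; ring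
        _ ≤ ((|m| : ℤ) : ℝ) := by exact_mod_cast this
        _ = |(m:ℝ)| := by push_cast; ring
      have hsub : |(m:ℝ)| - |(k:ℝ)| ≤ |(m:ℝ) - k| := abs_sub_abs_le_abs_sub _ _
      have hD : (1 + (m:ℝ) ^ 2) / 4 ≤ Ω k ^ 2 * (1 + ((m : ℝ) - k) ^ 2) := by
        have h1 : (1:ℝ) ≤ Ω k ^ 2 := by nlinarith [hone k]
        have h2 : (m:ℝ) ^ 2 / 4 ≤ ((m:ℝ) - k) ^ 2 := by
          nlinarith [sq_abs ((m:ℝ) - k), sq_abs (m:ℝ), abs_nonneg (k:ℝ), abs_nonneg ((m:ℝ)-k)]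
        nlinarith [sq_nonneg ((m:ℝ) - k)]
      have : Ω m ^ 2 / (Ω k ^ 2 * (1 + ((m : ℝ) - k) ^ 2)) ≤ Bm := by
        rw [hBm]
        apply div_le_div₀ (by positivity) (ha3' m) (by positivity) hD
      have hnn : 0 ≤ C ^ 2 * (1 / (1 + ((m : ℝ) - k) ^ 2)) := by positivity
      linarith
    · -- k large: use doubling
      push_neg at hcase
      have hΩ : Ω m ≤ C * Ω k := hdoub m k hcase
      have h1 : Ω m ^ 2 / (Ω k ^ 2 * (1 + ((m : ℝ) - k) ^ 2)) ≤
          C ^ 2 * (1 / (1 + ((m : ℝ) - k) ^ 2)) := by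
        rw [div_le_iff₀ (mul_pos (pow_pos (hpos k) 2) hden)]
        have hk2 : (0:ℝ) < Ω k ^ 2 := pow_pos (hpos k) 2
        have : Ω m ^ 2 ≤ C ^ 2 * Ω k ^ 2 := by nlinarith [(hpos m).le, (hpos k).le]
        calc Ω m ^ 2 ≤ C ^ 2 * Ω k ^ 2 := this
        _ = C ^ 2 * (1 / (1 + ((m : ℝ) - k) ^ 2)) * (Ω k ^ 2 * (1 + ((m : ℝ) - k) ^ 2)) := by
            field_simp
      have : (0:ℝ) ≤ (if k ∈ s then Bm else 0) := by positivity
      linarith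
  have hsum_ind : Summable (fun k : ℤ => if k ∈ s then Bm else 0) :=
    summable_of_ne_finset_zero (s := s) (fun k hk => if_neg hk)
  have hg' : Summable (fun k : ℤ => 1 / (1 + ((m:ℝ) - k) ^ 2)) := by
    have := hG.comp_injective (Equiv.subLeft m).injective
    apply this.congr
    intro k
    simp only [Function.comp, Equiv.subLeft_apply]
    push_cast
    ring_nf
  have hsum_tail : Summable (fun k : ℤ => C ^ 2 * (1 / (1 + ((m:ℝ) - k) ^ 2))) :=
    hg'.mul_left _
  have hsum_h := hsum_ind.add hsum_tail
  have hf_nonneg : ∀ k : ℤ, 0 ≤ Ω m ^ 2 / (Ω k ^ 2 * (1 + ((m : ℝ) - k) ^ 2)) := by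
    intro k
    have := hpos m; have := hpos k
    positivity
  have hsumf : Summable (fun k : ℤ => Ω m ^ 2 / (Ω k ^ 2 * (1 + ((m : ℝ) - k) ^ 2))) :=
    Summable.of_nonneg_of_le hf_nonneg key hsum_h
  refine ⟨hsumf, ?_⟩
  have hstep1 : (∑' k : ℤ, Ω m ^ 2 / (Ω k ^ 2 * (1 + ((m : ℝ) - k) ^ 2))) ≤
      ∑' k : ℤ, ((if k ∈ s then Bm else 0) + C ^ 2 * (1 / (1 + ((m:ℝ) - k) ^ 2))) :=
    Summable.tsum_le_tsum key hsumf hsum_h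
  rw [Summable.tsum_add hsum_ind hsum_tail] at hstep1
  -- bound the indicator part
  have hind : (∑' k : ℤ, (if k ∈ s then Bm else 0)) ≤ 16 * C3 ^ 2 := by
    rw [tsum_eq_sum (s := s) (fun k hk => if_neg hk)]
    have : ∑ k ∈ s, (if k ∈ s then Bm else 0) = (s.card : ℝ) * Bm := by
      rw [Finset.sum_congr rfl (fun k hk => if_pos hk), Finset.sum_const, nsmul_eq_mul]
    rw [this]
    have hcard : (s.card : ℝ) = 2 * |(m:ℝ)| + 1 := by
      rw [hs, Int.card_Icc]
      have h0 : (0:ℤ) ≤ 1 + |m| * 2 := by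
        have := abs_nonneg m; linarith
      have he : |m| + 1 - -|m| = 1 + |m| * 2 := by ring
      rw [he, ← Int.cast_natCast (R := ℝ), Int.toNat_of_nonneg h0]
      push_cast
      ring
    rw [hcard, hBm]
    rw [mul_div_assoc', div_le_iff₀ (by positivity)]
    have ha : (0:ℝ) ≤ |(m:ℝ)| := abs_nonneg _
    have ha2 : |(m:ℝ)| ^ 2 = (m:ℝ) ^ 2 := sq_abs _
    nlinarith [sq_nonneg (|(m:ℝ)| - 1), sq_nonneg C3]
  -- compute the tail part
  have htail : (∑' k : ℤ, C ^ 2 * (1 / (1 + ((m:ℝ) - k) ^ 2))) = C ^ 2 * T := by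
    rw [tsum_mul_left, hT]
    congr 1
    have := (Equiv.subLeft m).tsum_eq (fun j : ℤ => 1 / (1 + (j : ℝ) ^ 2))
    rw [← this]
    apply tsum_congr
    intro k
    simp only [Equiv.subLeft_apply]
    push_cast
    ring_nf
  rw [htail] at hstep1
  linarith
end

section
/- For every α with 0 ≤ α < 1/2, the weight Ω(k) = (1+|k|)^α on ℤ satisfies conditions (a1), (a2) and (a3): in particular, there is M > 0 such that for all k ∈ ℤ and all n ∈ ℕ, ((1/(n+1))·Σ_{m=k}^{k+n} Ω(m)²)·((1/(n+1))·Σ_{m=k}^{k+n} Ω(m)^{−2}) ≤ M. -/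
open scoped BigOperators

lemma bern15 (γ : ℝ) (hγ0 : 0 < γ) (hγ1 : γ ≤ 1) (n : ℕ) :
    (n : ℝ) ^ γ + γ * ((n : ℝ) + 1) ^ (γ - 1) ≤ ((n : ℝ) + 1) ^ γ := by
  set x : ℝ := (n : ℝ) + 1 with hx
  have hx0 : 0 < x := by positivity
  have hs : -1 ≤ -(1 / x) := by
    rw [neg_le_neg_iff]
    exact div_le_one_of_le₀ (by linarith [Nat.cast_nonneg (α := ℝ) n]) hx0.le
  have hB := rpow_one_add_le_one_add_mul_self hs hγ0.le hγ1
  have h1 : (1 : ℝ) + -(1/x) = (n : ℝ) / x := by field_simp; linarith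
  rw [h1] at hB
  have h2 : ((n : ℝ) / x) ^ γ = (n : ℝ) ^ γ / x ^ γ :=
    Real.div_rpow (Nat.cast_nonneg n) hx0.le γ
  rw [h2] at hB
  have hxγ : 0 < x ^ γ := Real.rpow_pos_of_pos hx0 γ
  have h3 : x ^ (γ - 1) = x ^ γ / x := by
    rw [Real.rpow_sub hx0, Real.rpow_one]
  rw [h3]
  have := (div_le_iff₀ hxγ).mp hB
  have h4 : (1 + γ * -(1/x)) * x ^ γ = x ^ γ - γ * (x ^ γ / x) := by
    field_simp; ring
  nlinarith [this, h4]

lemma Tsum15 (β : ℝ) (hβ0 : 0 ≤ β) (hβ1 : β < 1) (ℓ : ℕ) :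
    ∑ i ∈ Finset.range ℓ, ((1 + (i : ℝ)) ^ β)⁻¹ ≤ (ℓ : ℝ) ^ (1 - β) / (1 - β) := by
  have hγ0 : 0 < 1 - β := by linarith
  induction ℓ with
  | zero => simp [Real.zero_rpow (by linarith : (1:ℝ) - β ≠ 0)]
  | succ n ih =>
    rw [Finset.sum_range_succ]
    have hterm : ((1 + (n : ℝ)) ^ β)⁻¹ = ((n : ℝ) + 1) ^ ((1 - β) - 1) := by
      rw [show (1 - β) - 1 = -β by ring, Real.rpow_neg (by positivity), add_comm]
    have hb := bern15 (1 - β) hγ0 (by linarith) n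
    have : (n : ℝ) ^ (1 - β) / (1 - β) + ((n : ℝ) + 1) ^ ((1 - β) - 1)
        ≤ ((n : ℝ) + 1) ^ (1 - β) / (1 - β) := by
      rw [div_add' _ _ _ (ne_of_gt hγ0), div_le_div_iff₀ hγ0 hγ0]
      nlinarith [hb]
    rw [hterm]
    push_cast
    push_cast at this ih
    linarith

/-- For `0 ≤ α < 1/2`, the weight `Ω(k) = (1+|k|)^α` satisfies
conditions (a1), (a2) and (a3). -/
theorem stmt15 (α : ℝ) (hα0 : 0 ≤ α) (hα : α < 1 / 2)
    (Ω : ℤ → ℝ) (hΩ : ∀ k : ℤ, Ω k = (1 + |(k : ℝ)|) ^ α) :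
    (∃ M > 0, ∀ (k : ℤ) (n : ℕ),
      ((1 / (n + 1 : ℝ)) * ∑ i ∈ Finset.range (n + 1), Ω (k + i) ^ 2) *
        ((1 / (n + 1 : ℝ)) * ∑ i ∈ Finset.range (n + 1), (Ω (k + i) ^ 2)⁻¹) ≤ M) ∧
    (∃ C > 0, ∀ k : ℤ, Ω (2 * k) ≤ C * Ω k) ∧
    (∃ C > 0, ∀ k : ℤ, Ω k ≤ C * Real.sqrt (1 + |(k : ℝ)|)) := by
  have hx1 : ∀ m : ℤ, (1:ℝ) ≤ 1 + |(m:ℝ)| := fun m => by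
    have := abs_nonneg ((m:ℝ)); linarith
  refine ⟨?_, ⟨2, by norm_num, ?_⟩, ⟨1, by norm_num, ?_⟩⟩
  · -- (a1)
    set β := 2*α with hβdef
    have hβ0 : 0 ≤ β := by simp [hβdef]; linarith
    have hβ1 : β < 1 := by simp [hβdef]; linarith
    have hγ0 : 0 < 1 - β := by linarith
    refine ⟨4/(1-β), by positivity, ?_⟩
    intro k n
    have hΩ2 : ∀ m : ℤ, Ω m ^ 2 = (1 + |(m:ℝ)|) ^ β := by
      intro m
      rw [hΩ m, ← Real.rpow_natCast ((1 + |(m:ℝ)|) ^ α) 2,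
        ← Real.rpow_mul (by positivity)]
      norm_num [hβdef, mul_comm]
    set ℓ : ℕ := n + 1 with hℓ
    set L : ℝ := (n:ℝ) + 1 with hLdef
    have hL0 : (0:ℝ) < L := by positivity
    have hLℓ : (ℓ:ℝ) = L := by push_cast [hℓ, hLdef]; ring
    set e : ℤ := max k (-(k+n)) with he
    have habs : ∀ i : ℕ, i < ℓ →
        (e:ℝ) ≤ |(↑(k+(i:ℤ)) : ℝ)| ∧ |(↑(k+(i:ℤ)) : ℝ)| ≤ (e:ℝ) + n := by
      intro i hi
      have hi' : (i:ℤ) ≤ n := by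
        have : i ≤ n := Nat.lt_succ_iff.mp hi
        exact_mod_cast this
      have hZ : e ≤ |k + (i:ℤ)| ∧ |k + (i:ℤ)| ≤ e + n := by
        rcases abs_cases (k + (i:ℤ)) with ⟨h1, h2⟩ | ⟨h1, h2⟩ <;>
          constructor <;> simp only [he] <;> omega
      constructor
      · rw [← Int.cast_abs]; exact_mod_cast hZ.1
      · rw [← Int.cast_abs]; exact_mod_cast hZ.2
    set a : ℤ := 1 + max e 0 with ha
    have ha1 : (1:ℝ) ≤ (a:ℝ) := by
      have : (1:ℤ) ≤ a := by
        rw [ha]; have := le_max_right e (0:ℤ); omega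
      exact_mod_cast this
    have ha0 : (0:ℝ) < (a:ℝ) := by linarith
    have hlow : ∀ i : ℕ, i < ℓ → (a:ℝ) ≤ 1 + |(↑(k+(i:ℤ)) : ℝ)| := by
      intro i hi
      have h1 := (habs i hi).1
      have h2 : (e:ℝ) ≤ max (e:ℝ) 0 := le_max_left _ _
      have h3 : (a:ℝ) = 1 + max (e:ℝ) 0 := by push_cast [ha]; ring
      rcases le_total (e:ℝ) 0 with h | h
      · rw [h3, max_eq_right h]; linarith [abs_nonneg ((↑(k+(i:ℤ)) : ℝ))]
      · rw [h3, max_eq_left h]; linarith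
    have hhigh : ∀ i : ℕ, i < ℓ → 1 + |(↑(k+(i:ℤ)) : ℝ)| ≤ (a:ℝ) + n := by
      intro i hi
      have h1 := (habs i hi).2
      have h3 : (a:ℝ) = 1 + max (e:ℝ) 0 := by push_cast [ha]; ring
      have : (e:ℝ) ≤ max (e:ℝ) 0 := le_max_left _ _
      linarith
    have hS2nonneg : (0:ℝ) ≤ ∑ i ∈ Finset.range ℓ, (Ω (k + i) ^ 2)⁻¹ :=
      Finset.sum_nonneg fun i _ => by positivity
    have hS1nonneg : (0:ℝ) ≤ ∑ i ∈ Finset.range ℓ, Ω (k + i) ^ 2 :=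
      Finset.sum_nonneg fun i _ => by positivity
    rcases le_or_gt L (a:ℝ) with hc | hc
    · -- far from origin: a ≥ ℓ
      have hS1 : ∑ i ∈ Finset.range ℓ, Ω (k + i) ^ 2 ≤ ℓ * (2*(a:ℝ)) ^ β := by
        calc ∑ i ∈ Finset.range ℓ, Ω (k + i) ^ 2
            ≤ ∑ _i ∈ Finset.range ℓ, (2*(a:ℝ)) ^ β := by
              refine Finset.sum_le_sum fun i hi => ?_
              rw [hΩ2]
              refine Real.rpow_le_rpow (by positivity) ?_ hβ0
              have := hhigh i (Finset.mem_range.mp hi)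
              have hn : (n:ℝ) ≤ L - 1 := by rw [hLdef]; linarith
              linarith
          _ = ℓ * (2*(a:ℝ)) ^ β := by
              rw [Finset.sum_const, Finset.card_range, nsmul_eq_mul]
      have hS2 : ∑ i ∈ Finset.range ℓ, (Ω (k + i) ^ 2)⁻¹ ≤ ℓ * ((a:ℝ) ^ β)⁻¹ := by
        calc ∑ i ∈ Finset.range ℓ, (Ω (k + i) ^ 2)⁻¹
            ≤ ∑ _i ∈ Finset.range ℓ, ((a:ℝ) ^ β)⁻¹ := by
              refine Finset.sum_le_sum fun i hi => ?_
              rw [hΩ2]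
              exact inv_anti₀ (Real.rpow_pos_of_pos ha0 β)
                (Real.rpow_le_rpow ha0.le (hlow i (Finset.mem_range.mp hi)) hβ0)
          _ = ℓ * ((a:ℝ) ^ β)⁻¹ := by
              rw [Finset.sum_const, Finset.card_range, nsmul_eq_mul]
      have hkey : (1/L * ∑ i ∈ Finset.range ℓ, Ω (k + i) ^ 2) *
          (1/L * ∑ i ∈ Finset.range ℓ, (Ω (k + i) ^ 2)⁻¹)
          ≤ (2*(a:ℝ)) ^ β * ((a:ℝ) ^ β)⁻¹ := by
        have h1 : 1/L * ∑ i ∈ Finset.range ℓ, Ω (k + i) ^ 2 ≤ (2*(a:ℝ)) ^ β := by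
          rw [one_div, inv_mul_le_iff₀ hL0, ← hLℓ]
          exact hS1
        have h2 : 1/L * ∑ i ∈ Finset.range ℓ, (Ω (k + i) ^ 2)⁻¹ ≤ ((a:ℝ) ^ β)⁻¹ := by
          rw [one_div, inv_mul_le_iff₀ hL0, ← hLℓ]
          exact hS2
        exact mul_le_mul h1 h2 (by positivity) (by positivity)
      refine le_trans hkey ?_
      have hsplit : (2*(a:ℝ)) ^ β = 2 ^ β * (a:ℝ) ^ β :=
        Real.mul_rpow (by norm_num) ha0.le
      have haβ : ((a:ℝ) ^ β) ≠ 0 := ne_of_gt (Real.rpow_pos_of_pos ha0 β)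
      rw [hsplit, mul_assoc, mul_inv_cancel₀ haβ, mul_one]
      have h2β : (2:ℝ) ^ β ≤ 2 := by
        calc (2:ℝ) ^ β ≤ (2:ℝ) ^ (1:ℝ) :=
              Real.rpow_le_rpow_of_exponent_le one_le_two (by linarith)
          _ = 2 := Real.rpow_one 2
      have : (2:ℝ) ≤ 4/(1-β) := by
        rw [le_div_iff₀ hγ0]; nlinarith
      linarith
    · -- close to origin: a < ℓ
      have hS1 : 1/L * ∑ i ∈ Finset.range ℓ, Ω (k + i) ^ 2 ≤ 2 * L ^ β := by
        have hS1' : ∑ i ∈ Finset.range ℓ, Ω (k + i) ^ 2 ≤ ℓ * (2*L) ^ β := by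
          calc ∑ i ∈ Finset.range ℓ, Ω (k + i) ^ 2
              ≤ ∑ _i ∈ Finset.range ℓ, (2*L) ^ β := by
                refine Finset.sum_le_sum fun i hi => ?_
                rw [hΩ2]
                refine Real.rpow_le_rpow (by positivity) ?_ hβ0
                have := hhigh i (Finset.mem_range.mp hi)
                have hn : (n:ℝ) ≤ L := by rw [hLdef]; linarith
                linarith
            _ = ℓ * (2*L) ^ β := by
                rw [Finset.sum_const, Finset.card_range, nsmul_eq_mul]
        rw [one_div, inv_mul_le_iff₀ hL0]
        calc ∑ i ∈ Finset.range ℓ, Ω (k + i) ^ 2 ≤ ℓ * (2*L) ^ β := hS1'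
          _ = L * (2*L) ^ β := by rw [hLℓ]
          _ ≤ L * (2 * L ^ β) := by
              have : (2*L) ^ β = 2 ^ β * L ^ β := Real.mul_rpow (by norm_num) hL0.le
              have h2β : (2:ℝ) ^ β ≤ 2 := by
                calc (2:ℝ) ^ β ≤ (2:ℝ) ^ (1:ℝ) :=
                      Real.rpow_le_rpow_of_exponent_le one_le_two (by linarith)
                  _ = 2 := Real.rpow_one 2
              have hLβ : (0:ℝ) ≤ L ^ β := (Real.rpow_pos_of_pos hL0 β).le
              rw [this]
              exact mul_le_mul_of_nonneg_left
                (mul_le_mul_of_nonneg_right h2β hLβ) hL0.le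
      have hS2 : ∑ i ∈ Finset.range ℓ, (Ω (k + i) ^ 2)⁻¹
          ≤ 2 * (L ^ (1-β) / (1-β)) := by
        set t : ℕ := (min (-k) (ℓ:ℤ)).toNat with htdef
        have ht : t ≤ ℓ := by
          have : min (-k) (ℓ:ℤ) ≤ (ℓ:ℤ) := min_le_right _ _
          omega
        have htk1 : t < ℓ → 0 ≤ k + (t:ℤ) := by
          intro hlt
          have hmin := Int.self_le_toNat (min (-k) (ℓ:ℤ))
          rcases le_total (-k) (ℓ:ℤ) with h | h
          · rw [min_eq_left h] at hmin; omega
          · rw [min_eq_right h] at hmin; omega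
        have htk2 : 0 < t → k + (t:ℤ) ≤ 0 := by
          intro hpos
          rcases le_or_gt 0 (min (-k) (ℓ:ℤ)) with h | h
          · have := Int.toNat_of_nonneg h
            have h2 : min (-k) (ℓ:ℤ) ≤ -k := min_le_left _ _
            omega
          · have : (min (-k) (ℓ:ℤ)).toNat = 0 := Int.toNat_of_nonpos h.le
            omega
        have hsplit : ∑ i ∈ Finset.range ℓ, (Ω (k + i) ^ 2)⁻¹ =
            (∑ i ∈ Finset.range t, (Ω (k + i) ^ 2)⁻¹) +
            ∑ i ∈ Finset.Ico t ℓ, (Ω (k + i) ^ 2)⁻¹ := by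
          rw [Finset.range_eq_Ico, ← Finset.sum_Ico_consecutive _ (Nat.zero_le t) ht,
            ← Finset.range_eq_Ico]
        have hA : ∑ i ∈ Finset.range t, (Ω (k + i) ^ 2)⁻¹ ≤ L ^ (1-β) / (1-β) := by
          rw [← Finset.sum_range_reflect]
          calc ∑ j ∈ Finset.range t, (Ω (k + ((t - 1 - j : ℕ):ℤ)) ^ 2)⁻¹
              ≤ ∑ j ∈ Finset.range t, ((1 + (j:ℝ)) ^ β)⁻¹ := by
                refine Finset.sum_le_sum fun j hj => ?_
                have hjt : j < t := Finset.mem_range.mp hj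
                have hkt := htk2 (lt_of_le_of_lt (Nat.zero_le j) hjt)
                rw [hΩ2]
                have hcast : ((t - 1 - j : ℕ):ℤ) = (t:ℤ) - 1 - j := by omega
                have hint : (j:ℤ) ≤ |k + ((t - 1 - j : ℕ):ℤ)| := by
                  rcases abs_cases (k + ((t - 1 - j : ℕ):ℤ)) with ⟨h1, h2⟩ | ⟨h1, h2⟩ <;>
                    omega
                have hreal : 1 + (j:ℝ) ≤ 1 + |(↑(k + ((t - 1 - j : ℕ):ℤ)) : ℝ)| := by
                  rw [← Int.cast_abs]
                  have : ((j:ℤ):ℝ) ≤ ((|k + ((t - 1 - j : ℕ):ℤ)| : ℤ):ℝ) := by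
                    exact_mod_cast hint
                  push_cast at this ⊢
                  linarith
                have hb1 : (0:ℝ) < 1 + (j:ℝ) := by positivity
                exact inv_anti₀ (Real.rpow_pos_of_pos hb1 β)
                  (Real.rpow_le_rpow hb1.le hreal hβ0)
            _ ≤ (t:ℝ) ^ (1-β) / (1-β) := Tsum15 β hβ0 hβ1 t
            _ ≤ L ^ (1-β) / (1-β) := by
                refine div_le_div_of_nonneg_right ?_ hγ0.le
                refine Real.rpow_le_rpow (Nat.cast_nonneg t) ?_ hγ0.le
                rw [← hLℓ]; exact_mod_cast ht
        have hB : ∑ i ∈ Finset.Ico t ℓ, (Ω (k + i) ^ 2)⁻¹ ≤ L ^ (1-β) / (1-β) := by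
          rw [Finset.sum_Ico_eq_sum_range]
          calc ∑ j ∈ Finset.range (ℓ - t), (Ω (k + ((t + j : ℕ):ℤ)) ^ 2)⁻¹
              ≤ ∑ j ∈ Finset.range (ℓ - t), ((1 + (j:ℝ)) ^ β)⁻¹ := by
                refine Finset.sum_le_sum fun j hj => ?_
                have hjt : j < ℓ - t := Finset.mem_range.mp hj
                have hkt := htk1 (by omega)
                rw [hΩ2]
                have hint : (j:ℤ) ≤ |k + ((t + j : ℕ):ℤ)| := by
                  rcases abs_cases (k + ((t + j : ℕ):ℤ)) with ⟨h1, h2⟩ | ⟨h1, h2⟩ <;>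
                    omega
                have hreal : 1 + (j:ℝ) ≤ 1 + |(↑(k + ((t + j : ℕ):ℤ)) : ℝ)| := by
                  rw [← Int.cast_abs]
                  have : ((j:ℤ):ℝ) ≤ ((|k + ((t + j : ℕ):ℤ)| : ℤ):ℝ) := by
                    exact_mod_cast hint
                  push_cast at this ⊢
                  linarith
                have hb1 : (0:ℝ) < 1 + (j:ℝ) := by positivity
                exact inv_anti₀ (Real.rpow_pos_of_pos hb1 β)
                  (Real.rpow_le_rpow hb1.le hreal hβ0)
            _ ≤ ((ℓ - t : ℕ):ℝ) ^ (1-β) / (1-β) := Tsum15 β hβ0 hβ1 (ℓ - t)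
            _ ≤ L ^ (1-β) / (1-β) := by
                refine div_le_div_of_nonneg_right ?_ hγ0.le
                refine Real.rpow_le_rpow (Nat.cast_nonneg _) ?_ hγ0.le
                rw [← hLℓ]
                have : ℓ - t ≤ ℓ := Nat.sub_le _ _
                exact_mod_cast this
        rw [hsplit]; linarith
      -- combine
      have h2 : 1/L * ∑ i ∈ Finset.range ℓ, (Ω (k + i) ^ 2)⁻¹
          ≤ 2 * (L ^ β)⁻¹ / (1-β) := by
        rw [one_div, inv_mul_le_iff₀ hL0]
        calc ∑ i ∈ Finset.range ℓ, (Ω (k + i) ^ 2)⁻¹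
            ≤ 2 * (L ^ (1-β) / (1-β)) := hS2
          _ = L * (2 * (L ^ β)⁻¹ / (1-β)) := by
              have hLβ : L ^ β ≠ 0 := ne_of_gt (Real.rpow_pos_of_pos hL0 β)
              rw [Real.rpow_sub hL0, Real.rpow_one]
              field_simp
      have hLβ : L ^ β ≠ 0 := ne_of_gt (Real.rpow_pos_of_pos hL0 β)
      calc (1/L * ∑ i ∈ Finset.range ℓ, Ω (k + i) ^ 2) *
          (1/L * ∑ i ∈ Finset.range ℓ, (Ω (k + i) ^ 2)⁻¹)
          ≤ (2 * L ^ β) * (2 * (L ^ β)⁻¹ / (1-β)) :=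
            mul_le_mul hS1 h2 (mul_nonneg (by positivity) hS2nonneg) (by positivity)
        _ = 4/(1-β) := by field_simp; ring
  · -- (a2)
    intro k
    rw [hΩ, hΩ]
    have habs : |((2*k : ℤ):ℝ)| = 2 * |(k:ℝ)| := by
      push_cast; rw [abs_mul]; norm_num
    calc (1 + |((2*k : ℤ):ℝ)|) ^ α ≤ (2 * (1 + |(k:ℝ)|)) ^ α := by
          refine Real.rpow_le_rpow (by positivity) ?_ hα0
          rw [habs]; linarith [abs_nonneg ((k:ℝ))]
      _ = 2 ^ α * (1 + |(k:ℝ)|) ^ α :=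
          Real.mul_rpow (by norm_num) (by positivity)
      _ ≤ 2 * (1 + |(k:ℝ)|) ^ α := by
          have h2β : (2:ℝ) ^ α ≤ 2 := by
            calc (2:ℝ) ^ α ≤ (2:ℝ) ^ (1:ℝ) :=
                  Real.rpow_le_rpow_of_exponent_le one_le_two (by linarith)
              _ = 2 := Real.rpow_one 2
          have : (0:ℝ) ≤ (1 + |(k:ℝ)|) ^ α := by positivity
          nlinarith
  · -- (a3)
    intro k
    rw [hΩ, Real.sqrt_eq_rpow, one_mul]
    exact Real.rpow_le_rpow_of_exponent_le (hx1 k) (by linarith)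
end

section
/- For every δ with 0 ≤ δ < ∞, the weight Ω(k) = (log(e+|k|))^δ on ℤ satisfies conditions (a1), (a2) and (a3): in particular, there is M > 0 such that for all k ∈ ℤ and all n ∈ ℕ, ((1/(n+1))·Σ_{m=k}^{k+n} Ω(m)²)·((1/(n+1))·Σ_{m=k}^{k+n} Ω(m)^{−2}) ≤ M. -/
open scoped BigOperators

lemma aux_one_le_log (x : ℝ) (hx : 0 ≤ x) : 1 ≤ Real.log (Real.exp 1 + x) := by
  rw [Real.le_log_iff_exp_le (by positivity)]
  linarith

lemma aux_polylog (a p : ℝ) (ha : 0 ≤ a) (hp : 0 < p) :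
    ∃ C > 0, ∀ x : ℝ, 0 ≤ x → Real.log (Real.exp 1 + x) ^ a ≤ C * (1 + x) ^ p := by
  rcases eq_or_lt_of_le ha with h0 | ha'
  · refine ⟨1, one_pos, fun x hx => ?_⟩
    rw [← h0, Real.rpow_zero, one_mul]
    calc (1:ℝ) = 1 ^ p := (Real.one_rpow p).symm
    _ ≤ (1 + x) ^ p := Real.rpow_le_rpow zero_le_one (by linarith) hp.le
  · set ε := p / a with hε
    have hεpos : 0 < ε := div_pos hp ha'
    have hE : (0:ℝ) < Real.exp 1 := Real.exp_pos 1
    have hE1 : (1:ℝ) ≤ Real.exp 1 := Real.one_le_exp zero_le_one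
    refine ⟨Real.exp 1 ^ p * ε⁻¹ ^ a, by positivity, fun x hx => ?_⟩
    have h1 : Real.log (Real.exp 1 + x) ≤ (Real.exp 1 + x) ^ ε * ε⁻¹ := by
      have := Real.log_le_rpow_div (x := Real.exp 1 + x) (by positivity) hεpos
      rwa [div_eq_mul_inv] at this
    have hlognn : 0 ≤ Real.log (Real.exp 1 + x) :=
      le_trans zero_le_one (aux_one_le_log x hx)
    have h2 : Real.log (Real.exp 1 + x) ^ a ≤ ((Real.exp 1 + x) ^ ε * ε⁻¹) ^ a :=
      Real.rpow_le_rpow hlognn h1 ha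
    have h3 : ((Real.exp 1 + x) ^ ε * ε⁻¹) ^ a = (Real.exp 1 + x) ^ p * ε⁻¹ ^ a := by
      rw [Real.mul_rpow (Real.rpow_nonneg (by positivity) ε) (inv_nonneg.2 hεpos.le),
        ← Real.rpow_mul (by positivity), hε, div_mul_cancel₀ _ (ne_of_gt ha')]
    have h4 : (Real.exp 1 + x) ^ p ≤ Real.exp 1 ^ p * (1 + x) ^ p := by
      rw [← Real.mul_rpow hE.le (by linarith)]
      apply Real.rpow_le_rpow (by positivity) _ hp.le
      nlinarith
    calc Real.log (Real.exp 1 + x) ^ a ≤ (Real.exp 1 + x) ^ p * ε⁻¹ ^ a := by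
          rw [← h3]; exact h2
    _ ≤ Real.exp 1 ^ p * (1 + x) ^ p * ε⁻¹ ^ a :=
          mul_le_mul_of_nonneg_right h4 (Real.rpow_nonneg (inv_nonneg.2 hεpos.le) a)
    _ = Real.exp 1 ^ p * ε⁻¹ ^ a * (1 + x) ^ p := by ring

set_option maxHeartbeats 1000000 in
/-- For `0 ≤ δ < ∞`, the weight `Ω(k) = (log(e+|k|))^δ` satisfies
conditions (a1), (a2) and (a3). -/
theorem stmt16 (δ : ℝ) (hδ0 : 0 ≤ δ)
    (Ω : ℤ → ℝ) (hΩ : ∀ k : ℤ, Ω k = Real.log (Real.exp 1 + |(k : ℝ)|) ^ δ) :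
    (∃ M > 0, ∀ (k : ℤ) (n : ℕ),
      ((1 / (n + 1 : ℝ)) * ∑ i ∈ Finset.range (n + 1), Ω (k + i) ^ 2) *
        ((1 / (n + 1 : ℝ)) * ∑ i ∈ Finset.range (n + 1), (Ω (k + i) ^ 2)⁻¹) ≤ M) ∧
    (∃ C > 0, ∀ k : ℤ, Ω (2 * k) ≤ C * Ω k) ∧
    (∃ C > 0, ∀ k : ℤ, Ω k ≤ C * Real.sqrt (1 + |(k : ℝ)|)) := by
  have hE1 : (1:ℝ) ≤ Real.exp 1 := Real.one_le_exp zero_le_one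
  set a := 2 * δ with ha_def
  have ha : 0 ≤ a := by positivity
  have hL1 : ∀ m : ℤ, 1 ≤ Real.log (Real.exp 1 + |(m:ℝ)|) := fun m =>
    aux_one_le_log _ (abs_nonneg _)
  have hΩsq : ∀ m : ℤ, Ω m ^ 2 = Real.log (Real.exp 1 + |(m:ℝ)|) ^ a := by
    intro m
    have h0 : (0:ℝ) < Real.log (Real.exp 1 + |(m:ℝ)|) := lt_of_lt_of_le one_pos (hL1 m)
    rw [hΩ m, ← Real.rpow_natCast (Real.log (Real.exp 1 + |(m:ℝ)|) ^ δ) 2,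
      ← Real.rpow_mul h0.le]
    congr 1
    push_cast
    ring
  have hΩsq_one : ∀ m : ℤ, 1 ≤ Ω m ^ 2 := fun m => by
    rw [hΩsq m]
    calc (1:ℝ) = 1 ^ a := (Real.one_rpow a).symm
    _ ≤ _ := Real.rpow_le_rpow zero_le_one (hL1 m) ha
  refine ⟨?_, ?_, ?_⟩
  · -- (a1)
    obtain ⟨C₁, hC₁pos, hC₁⟩ := aux_polylog a (1/4) ha (by norm_num)
    refine ⟨2 ^ a + 6 * C₁, by positivity, fun k n => ?_⟩
    set N : ℝ := (n:ℝ) + 1 with hN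
    have hNpos : 0 < N := by positivity
    set b : ℕ := max k.natAbs (k+n).natAbs with hb
    set t : ℕ := Nat.sqrt b with ht
    set S : ℝ := Real.log (Real.exp 1 + (b:ℝ)) with hS
    have hS1 : 1 ≤ S := aux_one_le_log _ (Nat.cast_nonneg b)
    have hSpos : 0 < S := lt_of_lt_of_le one_pos hS1
    have hSapos : 0 < S ^ a := Real.rpow_pos_of_pos hSpos a
    have habs : ∀ i ∈ Finset.range (n+1), |(((k + i : ℤ)):ℝ)| ≤ (b:ℝ) := by
      intro i hi
      have hi' : (i:ℤ) ≤ n := by exact_mod_cast Nat.lt_succ_iff.mp (Finset.mem_range.mp hi)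
      have hbn : ((k+n).natAbs : ℤ) ≤ (b:ℤ) := by exact_mod_cast Nat.le_max_right k.natAbs (k+n).natAbs
      have hbk : (k.natAbs : ℤ) ≤ (b:ℤ) := by exact_mod_cast Nat.le_max_left k.natAbs (k+n).natAbs
      have h1 : k + i ≤ (b:ℤ) := by
        calc k + (i:ℤ) ≤ k + n := by linarith
        _ ≤ |k + n| := le_abs_self _
        _ = ((k+n).natAbs : ℤ) := Int.abs_eq_natAbs _
        _ ≤ (b:ℤ) := hbn
      have h2 : -(b:ℤ) ≤ k + i := by
        have hk1 : -|k| ≤ k := neg_abs_le k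
        have hk2 : |k| ≤ (b:ℤ) := by rw [Int.abs_eq_natAbs]; exact hbk
        have : (0:ℤ) ≤ i := Int.ofNat_nonneg i
        linarith
      have h3 : |(k+i : ℤ)| ≤ (b:ℤ) := abs_le.mpr ⟨h2, h1⟩
      exact_mod_cast h3
    have hLle : ∀ i ∈ Finset.range (n+1),
        Real.log (Real.exp 1 + |((k+i:ℤ):ℝ)|) ≤ S := by
      intro i hi
      exact Real.log_le_log (by positivity) (by linarith [habs i hi])
    have hsum1 : ∑ i ∈ Finset.range (n+1), Ω (k+i) ^ 2 ≤ N * S ^ a := by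
      calc ∑ i ∈ Finset.range (n+1), Ω (k+i) ^ 2
          ≤ ∑ _i ∈ Finset.range (n+1), S ^ a := by
            refine Finset.sum_le_sum fun i hi => ?_
            rw [hΩsq]
            exact Real.rpow_le_rpow (le_trans zero_le_one (hL1 _)) (hLle i hi) ha
      _ = N * S ^ a := by
            rw [Finset.sum_const, Finset.card_range, nsmul_eq_mul, hN]
            push_cast; ring
    have havg1 : (1/N) * ∑ i ∈ Finset.range (n+1), Ω (k+i) ^ 2 ≤ S ^ a := by
      calc (1/N) * ∑ i ∈ Finset.range (n+1), Ω (k+i) ^ 2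
          ≤ (1/N) * (N * S ^ a) := mul_le_mul_of_nonneg_left hsum1 (by positivity)
      _ = S ^ a := by field_simp
    have havg2nn : 0 ≤ (1/N) * ∑ i ∈ Finset.range (n+1), (Ω (k+i) ^ 2)⁻¹ :=
      mul_nonneg (by positivity)
        (Finset.sum_nonneg fun i _ => inv_nonneg.2 (sq_nonneg _))
    have hlarge : ∀ i : ℕ, (t:ℤ) < |k + i| → (Ω (k+i) ^ 2)⁻¹ ≤ 2 ^ a * (S ^ a)⁻¹ := by
      intro i hti
      have htb : (b:ℝ) < ((t:ℝ)+1)^2 := by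
        exact_mod_cast Nat.sqrt_lt'.mp (Nat.lt_succ_self t)
      have htnn : (0:ℝ) ≤ (t:ℝ) := Nat.cast_nonneg t
      have hEb : Real.exp 1 + (b:ℝ) ≤ (Real.exp 1 + ((t:ℝ)+1))^2 := by nlinarith
      have hS2 : S ≤ 2 * Real.log (Real.exp 1 + ((t:ℝ)+1)) := by
        have h5 := Real.log_le_log (x := Real.exp 1 + (b:ℝ)) (by positivity) hEb
        rwa [Real.log_pow, Nat.cast_ofNat] at h5
      have hti' : (t:ℝ) + 1 ≤ |((k+i:ℤ):ℝ)| := by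
        have : (t:ℤ) + 1 ≤ |k + i| := Int.lt_iff_add_one_le.mp hti
        exact_mod_cast this
      have hLge : Real.log (Real.exp 1 + ((t:ℝ)+1)) ≤
          Real.log (Real.exp 1 + |((k+i:ℤ):ℝ)|) :=
        Real.log_le_log (by positivity) (by linarith)
      have hhalf : S/2 ≤ Real.log (Real.exp 1 + |((k+i:ℤ):ℝ)|) := by linarith
      have h5 : (S/2) ^ a ≤ Ω (k+i) ^ 2 := by
        rw [hΩsq]
        exact Real.rpow_le_rpow (by positivity) hhalf ha
      calc (Ω (k+i) ^ 2)⁻¹ ≤ ((S/2) ^ a)⁻¹ :=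
            inv_anti₀ (Real.rpow_pos_of_pos (by positivity) a) h5
      _ = 2 ^ a * (S ^ a)⁻¹ := by
            rw [Real.div_rpow hSpos.le (by norm_num), inv_div, div_eq_mul_inv]
    by_cases hc : ∀ i ∈ Finset.range (n+1), (t:ℤ) < |k + i|
    · -- no small points
      have hsum2 : ∑ i ∈ Finset.range (n+1), (Ω (k+i) ^ 2)⁻¹ ≤ N * (2 ^ a * (S ^ a)⁻¹) := by
        calc ∑ i ∈ Finset.range (n+1), (Ω (k+i) ^ 2)⁻¹
            ≤ ∑ _i ∈ Finset.range (n+1), (2 ^ a * (S ^ a)⁻¹) :=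
              Finset.sum_le_sum fun i hi => hlarge i (hc i hi)
        _ = N * (2 ^ a * (S ^ a)⁻¹) := by
              rw [Finset.sum_const, Finset.card_range, nsmul_eq_mul, hN]
              push_cast; ring
      have havg2 : (1/N) * ∑ i ∈ Finset.range (n+1), (Ω (k+i) ^ 2)⁻¹
          ≤ 2 ^ a * (S ^ a)⁻¹ := by
        calc (1/N) * ∑ i ∈ Finset.range (n+1), (Ω (k+i) ^ 2)⁻¹
            ≤ (1/N) * (N * (2 ^ a * (S ^ a)⁻¹)) :=
              mul_le_mul_of_nonneg_left hsum2 (by positivity)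
        _ = 2 ^ a * (S ^ a)⁻¹ := by field_simp
      calc ((1/N) * ∑ i ∈ Finset.range (n+1), Ω (k+i) ^ 2) *
            ((1/N) * ∑ i ∈ Finset.range (n+1), (Ω (k+i) ^ 2)⁻¹)
          ≤ S ^ a * (2 ^ a * (S ^ a)⁻¹) := mul_le_mul havg1 havg2 havg2nn hSapos.le
      _ = 2 ^ a := by field_simp
      _ ≤ 2 ^ a + 6 * C₁ := by linarith
    · -- there is a small point
      push_neg at hc
      obtain ⟨i0, hi0mem, hi0⟩ := hc
      have hi0n : (i0:ℤ) ≤ n := by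
        exact_mod_cast Nat.lt_succ_iff.mp (Finset.mem_range.mp hi0mem)
      have hi0nn : (0:ℤ) ≤ (i0:ℤ) := Int.ofNat_nonneg i0
      have hbb : (b:ℤ) ≤ (t:ℤ) + n := by
        have hk : |k| ≤ (t:ℤ) + n := by
          have h6 : |k| ≤ |k + i0| + |(i0:ℤ)| := by
            calc |k| = |(k + i0) + (-(i0:ℤ))| := by ring_nf
            _ ≤ |k + i0| + |(-(i0:ℤ))| := abs_add_le _ _
            _ = |k + i0| + |(i0:ℤ)| := by rw [abs_neg]
          have h7 : |(i0:ℤ)| = i0 := abs_of_nonneg hi0nn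
          rw [h7] at h6
          linarith
        have hkn : |k + n| ≤ (t:ℤ) + n := by
          have h6 : |k + n| ≤ |k + i0| + |(n:ℤ) - i0| := by
            calc |k + n| = |(k + i0) + ((n:ℤ) - i0)| := by ring_nf
            _ ≤ |k + i0| + |(n:ℤ) - i0| := abs_add_le _ _
          have h7 : |(n:ℤ) - i0| = (n:ℤ) - i0 := abs_of_nonneg (by linarith)
          rw [h7] at h6
          linarith
        rw [Int.abs_eq_natAbs] at hk hkn
        have hk' : k.natAbs ≤ t + n := by exact_mod_cast hk
        have hkn' : (k + n).natAbs ≤ t + n := by exact_mod_cast hkn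
        have hmax : b ≤ t + n := by rw [hb]; omega
        exact_mod_cast hmax
      have htsqrt : (t:ℝ) ≤ Real.sqrt b := by
        rw [Real.le_sqrt (by positivity) (by positivity)]
        exact_mod_cast Nat.sqrt_le' b
      have hsqle : Real.sqrt (b:ℝ) ≤ ((b:ℝ)+1)/2 := by
        nlinarith [Real.sq_sqrt (show (0:ℝ) ≤ (b:ℝ) by positivity),
          Real.sqrt_nonneg (b:ℝ), sq_nonneg (Real.sqrt (b:ℝ) - 1)]
      have hb2 : (b:ℝ) ≤ 2*(n:ℝ) + 1 := by
        have h7 : (b:ℝ) ≤ (t:ℝ) + n := by exact_mod_cast hbb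
        linarith
      have hsplit := Finset.sum_filter_add_sum_filter_not (Finset.range (n+1))
        (fun i : ℕ => |k + (i:ℤ)| ≤ (t:ℤ)) (fun i => (Ω (k+i) ^ 2)⁻¹)
      have hsmallcard :
          ((Finset.range (n+1)).filter (fun i : ℕ => |k + (i:ℤ)| ≤ (t:ℤ))).card ≤ 2*t+1 := by
        have hcard := Finset.card_le_card_of_injOn
          (s := (Finset.range (n+1)).filter (fun i : ℕ => |k + (i:ℤ)| ≤ (t:ℤ)))
          (t := Finset.Icc (-(t:ℤ)) (t:ℤ)) (fun i : ℕ => k + (i:ℤ))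
          (fun i hi => by
            rw [Finset.mem_coe, Finset.mem_Icc]
            exact abs_le.mp ((Finset.mem_filter.mp hi).2))
          (fun i _ j _ h => by
            have h' : k + (i:ℤ) = k + (j:ℤ) := h
            have : (i:ℤ) = (j:ℤ) := add_left_cancel h'
            exact_mod_cast this)
        rw [Int.card_Icc] at hcard
        omega
      have hsmall : ∑ i ∈ (Finset.range (n+1)).filter (fun i : ℕ => |k + (i:ℤ)| ≤ (t:ℤ)),
          (Ω (k+i) ^ 2)⁻¹ ≤ (2*(t:ℝ)+1) := by
        calc ∑ i ∈ (Finset.range (n+1)).filter (fun i : ℕ => |k + (i:ℤ)| ≤ (t:ℤ)),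
            (Ω (k+i) ^ 2)⁻¹
            ≤ ∑ _i ∈ (Finset.range (n+1)).filter (fun i : ℕ => |k + (i:ℤ)| ≤ (t:ℤ)), (1:ℝ) :=
              Finset.sum_le_sum fun i _ => inv_le_one_of_one_le₀ (hΩsq_one _)
        _ = (((Finset.range (n+1)).filter (fun i : ℕ => |k + (i:ℤ)| ≤ (t:ℤ))).card : ℝ) := by
              rw [Finset.sum_const, nsmul_eq_mul, mul_one]
        _ ≤ (2*(t:ℝ)+1) := by exact_mod_cast Nat.cast_le.mpr hsmallcard
      have hlargesum : ∑ i ∈ (Finset.range (n+1)).filter (fun i : ℕ => ¬ |k + (i:ℤ)| ≤ (t:ℤ)),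
          (Ω (k+i) ^ 2)⁻¹ ≤ N * (2 ^ a * (S ^ a)⁻¹) := by
        have hcardle : (((Finset.range (n+1)).filter
            (fun i : ℕ => ¬ |k + (i:ℤ)| ≤ (t:ℤ))).card : ℝ) ≤ N := by
          rw [hN]
          have := Finset.card_filter_le (Finset.range (n+1))
            (fun i : ℕ => ¬ |k + (i:ℤ)| ≤ (t:ℤ))
          rw [Finset.card_range] at this
          exact_mod_cast this
        calc ∑ i ∈ (Finset.range (n+1)).filter (fun i : ℕ => ¬ |k + (i:ℤ)| ≤ (t:ℤ)),
            (Ω (k+i) ^ 2)⁻¹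
            ≤ ∑ _i ∈ (Finset.range (n+1)).filter (fun i : ℕ => ¬ |k + (i:ℤ)| ≤ (t:ℤ)),
              (2 ^ a * (S ^ a)⁻¹) :=
              Finset.sum_le_sum fun i hi =>
                hlarge i (not_le.mp (Finset.mem_filter.mp hi).2)
        _ = (((Finset.range (n+1)).filter (fun i : ℕ => ¬ |k + (i:ℤ)| ≤ (t:ℤ))).card : ℝ) *
              (2 ^ a * (S ^ a)⁻¹) := by rw [Finset.sum_const, nsmul_eq_mul]
        _ ≤ N * (2 ^ a * (S ^ a)⁻¹) :=
              mul_le_mul_of_nonneg_right hcardle (by positivity)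
      have hsum2 : ∑ i ∈ Finset.range (n+1), (Ω (k+i) ^ 2)⁻¹
          ≤ (2*(t:ℝ)+1) + N * (2 ^ a * (S ^ a)⁻¹) := by
        rw [← hsplit]
        exact add_le_add hsmall hlargesum
      have hkey : S ^ a * (2*(t:ℝ)+1) ≤ 6 * C₁ * N := by
        have hS4 : S ^ a ≤ C₁ * (1 + (b:ℝ)) ^ ((1:ℝ)/4) := hC₁ (b:ℝ) (by positivity)
        have h1b : (1 + (b:ℝ)) ≤ 2*N := by rw [hN]; push_cast; linarith
        have hq : (1+(b:ℝ)) ^ ((1:ℝ)/4) ≤ (2*N) ^ ((1:ℝ)/4) :=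
          Real.rpow_le_rpow (by positivity) h1b (by norm_num)
        have h2N1 : (1:ℝ) ≤ 2*N := by linarith
        have h8 : (t:ℝ) ≤ Real.sqrt (2*N) :=
          le_trans htsqrt (Real.sqrt_le_sqrt (by rw [hN]; push_cast; linarith))
        have h9 : (1:ℝ) ≤ Real.sqrt (2*N) := by
          rw [Real.le_sqrt (by norm_num) (by positivity)]
          norm_num
          linarith
        have h10 : Real.sqrt (2*N) = (2*N) ^ ((1:ℝ)/2) := by
          rw [Real.sqrt_eq_rpow]
        have hts : (2*(t:ℝ)+1) ≤ 3 * (2*N) ^ ((1:ℝ)/2) := by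
          rw [← h10]; linarith
        calc S ^ a * (2*(t:ℝ)+1)
            ≤ (C₁ * (2*N) ^ ((1:ℝ)/4)) * (3 * (2*N) ^ ((1:ℝ)/2)) :=
              mul_le_mul (le_trans hS4 (mul_le_mul_of_nonneg_left hq hC₁pos.le)) hts
                (by positivity) (by positivity)
        _ = 3 * C₁ * ((2*N) ^ ((1:ℝ)/4) * (2*N) ^ ((1:ℝ)/2)) := by ring
        _ = 3 * C₁ * (2*N) ^ ((3:ℝ)/4) := by
              rw [← Real.rpow_add (by linarith)]; norm_num
        _ ≤ 3 * C₁ * (2*N) := by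
              have h11 := Real.rpow_le_rpow_of_exponent_le h2N1
                (show (3:ℝ)/4 ≤ 1 by norm_num)
              rw [Real.rpow_one] at h11
              nlinarith
        _ = 6 * C₁ * N := by ring
      have hfinal : S ^ a * ((1/N) * ((2*(t:ℝ)+1) + N * (2 ^ a * (S ^ a)⁻¹)))
          = (S ^ a * (2*(t:ℝ)+1))/N + 2 ^ a := by
        field_simp
      calc ((1/N) * ∑ i ∈ Finset.range (n+1), Ω (k+i) ^ 2) *
            ((1/N) * ∑ i ∈ Finset.range (n+1), (Ω (k+i) ^ 2)⁻¹)
          ≤ S ^ a * ((1/N) * ((2*(t:ℝ)+1) + N * (2 ^ a * (S ^ a)⁻¹))) :=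
            mul_le_mul havg1 (mul_le_mul_of_nonneg_left hsum2 (by positivity))
              havg2nn hSapos.le
      _ = (S ^ a * (2*(t:ℝ)+1))/N + 2 ^ a := hfinal
      _ ≤ 6 * C₁ + 2 ^ a := by
            have : (S ^ a * (2*(t:ℝ)+1))/N ≤ 6 * C₁ := by
              rw [div_le_iff₀ hNpos]; linarith
            linarith
      _ = 2 ^ a + 6 * C₁ := by ring
  · -- (a2)
    refine ⟨2 ^ δ, by positivity, fun k => ?_⟩
    rw [hΩ, hΩ]
    have h1 : (0:ℝ) ≤ Real.log (Real.exp 1 + |(k:ℝ)|) :=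
      le_trans zero_le_one (hL1 k)
    have h2 : Real.log (Real.exp 1 + |((2*k : ℤ):ℝ)|) ≤
        2 * Real.log (Real.exp 1 + |(k:ℝ)|) := by
      have hle : Real.exp 1 + |((2*k:ℤ):ℝ)| ≤ (Real.exp 1 + |(k:ℝ)|)^2 := by
        push_cast [abs_mul]
        rw [abs_two]
        nlinarith [abs_nonneg (k:ℝ)]
      have h3 := Real.log_le_log (x := Real.exp 1 + |((2*k:ℤ):ℝ)|) (by positivity) hle
      rwa [Real.log_pow, Nat.cast_ofNat] at h3
    calc Real.log (Real.exp 1 + |((2*k:ℤ):ℝ)|) ^ δ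
        ≤ (2 * Real.log (Real.exp 1 + |(k:ℝ)|)) ^ δ :=
          Real.rpow_le_rpow (le_trans zero_le_one (hL1 _)) h2 hδ0
    _ = 2 ^ δ * Real.log (Real.exp 1 + |(k:ℝ)|) ^ δ :=
          Real.mul_rpow (by norm_num) h1
  · -- (a3)
    obtain ⟨C, hCpos, hC⟩ := aux_polylog δ (1/2) hδ0 (by norm_num)
    refine ⟨C, hCpos, fun k => ?_⟩
    rw [hΩ]
    calc Real.log (Real.exp 1 + |(k:ℝ)|) ^ δ
        ≤ C * (1 + |(k:ℝ)|) ^ ((1:ℝ)/2) := hC _ (abs_nonneg _)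
    _ = C * Real.sqrt (1 + |(k:ℝ)|) := by rw [Real.sqrt_eq_rpow]
end

section
/- Let S₁₁, S₁₂, S₂₁, S₂₂ ∈ L²([0,π]), let s₁(t) = ∫₀^ت S₁₁(τ) dτ and s₂(t) = ∫₀^t S₂₂(τ) dτ, and let u₁, u₂ : [0,π] → ℂ be absolutely continuous. Set ũ₁(t) = e^{−is₁(t)} u₁(t) and ũ₂(t) = e^{is₂(t)} u₂(t). Then ũ₁, ũ₂ are absolutely continuous and: (i) for almost every t ∈ [0,π], i·ũ₁′(t) + S₁₂(t) e^{−i(s₁(t)+s₂(t))}·ũ₂(t) = e^{−is₁(t)}·(i·u₁′(t) + S₁₁(t) u₁(t) + S₁₂(t) u₂(t)) and −i·ũ₂′(t) + S₂₁(t) e^{i(s₁(t)+s₂(t))}·ũ₁(t) = e^{is₂(t)}·(−i·u₂′(t) + S₂₁(t) u₁(t) + S₂₂(t) u₂(t)); (ii) for any a, b, c, d ∈ ℂ, the pair (u₁, u₂) satisfies u₁(0) + b·u₁(π) + a·u₂(0) = 0 and d·u₁(π) + c·u₂(0) + u₂(π) = 0 if and only if (ũ₁, ũ₂) satisfies ũ₁(0)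 + b̃·ũ₁(π) + ã·ũ₂(0) = 0 and d̃·ũ₁(π) + c̃·ũ₂(0) + ũ₂(π) = 0, where ã = a, b̃ = b·e^{is₁(π)}, c̃ = c·e^{is₂(π)}, d̃ = d·e^{i(s₁(π)+s₂(π))}. Consequently, the Dirac operator L(S)u = i·diag(1,−1)·u′ + S·u with boundary conditions determined by (a,b,c,d) is similar, via the gauge transform A = diag(e^{−is₁}, e^{is₂}), to the Dirac operator L(v)ũ = i·diag(1,−1)·ũ′ + v·ũ with off-diagonal potential v₁₂ = S₁₂ e^{−i(s₁+s₂)}, v₂₁ = S₂₁ e^{i(s₁+s₂)} and boundary conditions determined by (ã,b̃,c̃,d̃). -/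
open MeasureTheory Complex

/-- `s(t) = ∫₀^t S(τ) dτ`. -/
noncomputable def gaugeInt (S : ℝ → ℂ) (t : ℝ) : ℂ := ∫ τ in (0 : ℝ)..t, S τ

open Set

/-- Triangle Fubini / product rule for indefinite integrals. -/
lemma triangle_fubini (f g : ℝ → ℂ) (x : ℝ)
    (hf : IntegrableOn f (Ioc 0 x)) (hg : IntegrableOn g (Ioc 0 x)) :
    (∫ s in Ioc (0:ℝ) x, f s) * (∫ t in Ioc (0:ℝ) x, g t)
      = (∫ s in Ioc (0:ℝ) x, f s * ∫ t in Ioc (0:ℝ) s, g t)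
      + (∫ t in Ioc (0:ℝ) x, (∫ s in Ioc (0:ℝ) t, f s) * g t) := by
  set μ := volume.restrict (Ioc (0:ℝ) x) with hμ
  have hT : MeasurableSet {p : ℝ × ℝ | p.2 ≤ p.1} := measurableSet_le measurable_snd measurable_fst
  have H1 : Integrable (fun p : ℝ × ℝ => f p.1 * g p.2) (μ.prod μ) := Integrable.mul_prod hf hg
  set h : ℝ × ℝ → ℂ := ({p : ℝ × ℝ | p.2 ≤ p.1}).indicator (fun p => f p.1 * g p.2) with hh
  set k : ℝ × ℝ → ℂ := ({p : ℝ × ℝ | p.2 ≤ p.1}ᶜ).indicator (fun p => f p.1 * g p.2) with hk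
  have Hh : Integrable h (μ.prod μ) := H1.indicator hT
  have Hk : Integrable k (μ.prod μ) := H1.indicator hT.compl
  have hsum : ∀ p : ℝ × ℝ, h p + k p = f p.1 * g p.2 := by
    intro p
    simp [hh, hk, Set.indicator_apply]
    by_cases hp : p.2 ≤ p.1 <;> simp [hp]
  -- total integral
  have htot : ∫ p, h p ∂(μ.prod μ) + ∫ p, k p ∂(μ.prod μ)
      = (∫ s in Ioc (0:ℝ) x, f s) * (∫ t in Ioc (0:ℝ) x, g t) := by
    rw [← integral_add Hh Hk]
    simp_rw [hsum]
    exact integral_prod_mul f g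
  -- first piece
  have hH : ∫ p, h p ∂(μ.prod μ) = ∫ s in Ioc (0:ℝ) x, f s * ∫ t in Ioc (0:ℝ) s, g t := by
    rw [integral_prod _ Hh]
    refine setIntegral_congr_fun measurableSet_Ioc (fun s hs => ?_)
    have : ∀ t, h (s, t) = (Iic s).indicator (fun t => f s * g t) t := by
      intro t; simp [hh, Set.indicator_apply]
    simp_rw [this]
    rw [integral_indicator measurableSet_Iic]
    rw [hμ, Measure.restrict_restrict measurableSet_Iic]
    have hset : Iic s ∩ Ioc 0 x = Ioc 0 s := by
      ext y; simp only [mem_inter_iff, mem_Iic, mem_Ioc]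
      exact ⟨fun ⟨h1, h2, _⟩ => ⟨h2, h1⟩, fun ⟨h1, h2⟩ => ⟨h2, h1, h2.trans hs.2⟩⟩
    rw [hset, integral_const_mul]
  -- second piece
  have hK : ∫ p, k p ∂(μ.prod μ) = ∫ t in Ioc (0:ℝ) x, (∫ s in Ioc (0:ℝ) t, f s) * g t := by
    rw [integral_prod_symm _ Hk]
    refine setIntegral_congr_fun measurableSet_Ioc (fun t ht => ?_)
    have : ∀ s, k (s, t) = (Iio t).indicator (fun s => f s * g t) s := by
      intro s; simp [hk, Set.indicator_apply, not_le]
    simp_rw [this]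
    rw [integral_indicator measurableSet_Iio]
    rw [hμ, Measure.restrict_restrict measurableSet_Iio]
    have hset : Iio t ∩ Ioc 0 x = Ioo 0 t := by
      ext y; simp only [mem_inter_iff, mem_Iio, mem_Ioc, mem_Ioo]
      exact ⟨fun ⟨h1, h2, _⟩ => ⟨h2, h1⟩, fun ⟨h1, h2⟩ => ⟨h2, h1, h2.le.trans ht.2⟩⟩
    rw [hset, integral_mul_const, ← integral_Ioc_eq_integral_Ioo]
  rw [← htot, hH, hK]

/-- Product rule for absolutely continuous functions given as indefinite integrals. -/
lemma ftc_mul (f g F G : ℝ → ℂ) (X : ℝ) (hX : 0 ≤ X)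
    (hf : IntervalIntegrable f volume 0 X) (hg : IntervalIntegrable g volume 0 X)
    (hF : ∀ x ∈ Icc (0:ℝ) X, F x = F 0 + ∫ s in (0:ℝ)..x, f s)
    (hG : ∀ x ∈ Icc (0:ℝ) X, G x = G 0 + ∫ s in (0:ℝ)..x, g s) :
    IntervalIntegrable (fun s => f s * G s + F s * g s) volume 0 X ∧
    ∀ x ∈ Icc (0:ℝ) X, F x * G x = F 0 * G 0 + ∫ s in (0:ℝ)..x, (f s * G s + F s * g s) := by
  have huX : uIcc (0:ℝ) X = Icc 0 X := uIcc_of_le hX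
  -- continuous versions
  set cF : ℝ → ℂ := fun s => F 0 + ∫ t in (0:ℝ)..s, f t with hcFdef
  set cG : ℝ → ℂ := fun s => G 0 + ∫ t in (0:ℝ)..s, g t with hcGdef
  have hcF : ContinuousOn cF (Icc 0 X) := by
    refine continuousOn_const.add ?_
    have := intervalIntegral.continuousOn_primitive_interval' hf (by rw [huX]; exact ⟨le_refl 0, hX⟩)
    rwa [huX] at this
  have hcG : ContinuousOn cG (Icc 0 X) := by
    refine continuousOn_const.add ?_
    have := intervalIntegral.continuousOn_primitive_interval' hg (by rw [huX]; exact ⟨le_refl 0, hX⟩)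
    rwa [huX] at this
  -- integrability of f * G
  have I1 : IntervalIntegrable (fun s => f s * G s) volume 0 X := by
    have h1 : IntervalIntegrable (fun s => f s * cG s) volume 0 X :=
      hf.mul_continuousOn (by rw [huX]; exact hcG)
    rw [intervalIntegrable_iff_integrableOn_Ioc_of_le hX] at h1 ⊢
    exact h1.congr_fun (fun s hs => by rw [hG s (Ioc_subset_Icc_self hs)]) measurableSet_Ioc
  have I2 : IntervalIntegrable (fun s => F s * g s) volume 0 X := by
    have h1 : IntervalIntegrable (fun s => cF s * g s) volume 0 X :=
      hg.continuousOn_mul (by rw [huX]; exact hcF)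
    rw [intervalIntegrable_iff_integrableOn_Ioc_of_le hX] at h1 ⊢
    exact h1.congr_fun (fun s hs => by rw [hF s (Ioc_subset_Icc_self hs)]) measurableSet_Ioc
  refine ⟨I1.add I2, fun x hx => ?_⟩
  have hx0 : (0:ℝ) ≤ x := hx.1
  have hsub : Icc (0:ℝ) x ⊆ Icc 0 X := Icc_subset_Icc le_rfl hx.2
  have husub : uIcc (0:ℝ) x ⊆ uIcc 0 X := by rw [huX, uIcc_of_le hx0]; exact hsub
  have hfx : IntervalIntegrable f volume 0 x := hf.mono_set husub
  have hgx : IntervalIntegrable g volume 0 x := hg.mono_set husub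
  have hfx' : IntegrableOn f (Ioc 0 x) :=
    (intervalIntegrable_iff_integrableOn_Ioc_of_le hx0).1 hfx
  have hgx' : IntegrableOn g (Ioc 0 x) :=
    (intervalIntegrable_iff_integrableOn_Ioc_of_le hx0).1 hgx
  -- integrability of the four pieces on Ioc 0 x
  have hprimf : ContinuousOn (fun s => ∫ t in (0:ℝ)..s, f t) (uIcc 0 x) :=
    intervalIntegral.continuousOn_primitive_interval' hfx left_mem_uIcc
  have hprimg : ContinuousOn (fun s => ∫ t in (0:ℝ)..s, g t) (uIcc 0 x) :=
    intervalIntegral.continuousOn_primitive_interval' hgx left_mem_uIcc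
  have J1 : IntegrableOn (fun s => f s * ∫ t in Ioc (0:ℝ) s, g t) (Ioc 0 x) := by
    have := (hfx.mul_continuousOn hprimg)
    rw [intervalIntegrable_iff_integrableOn_Ioc_of_le hx0] at this
    exact this.congr_fun
      (fun s hs => by beta_reduce; rw [intervalIntegral.integral_of_le hs.1.le]) measurableSet_Ioc
  have J2 : IntegrableOn (fun s => (∫ t in Ioc (0:ℝ) s, f t) * g s) (Ioc 0 x) := by
    have := (hgx.continuousOn_mul hprimf)
    rw [intervalIntegrable_iff_integrableOn_Ioc_of_le hx0] at this
    exact this.congr_fun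
      (fun s hs => by beta_reduce; rw [intervalIntegral.integral_of_le hs.1.le]) measurableSet_Ioc
  -- rewrite the goal to Ioc integrals
  rw [hF x hx, hG x hx, intervalIntegral.integral_of_le hx0,
    intervalIntegral.integral_of_le hx0, intervalIntegral.integral_of_le hx0]
  have e1 : ∫ s in Ioc (0:ℝ) x, (f s * G s + F s * g s)
      = ∫ s in Ioc (0:ℝ) x,
          ((f s * G 0 + f s * ∫ t in Ioc (0:ℝ) s, g t)
            + (F 0 * g s + (∫ t in Ioc (0:ℝ) s, f t) * g s)) := by
    refine setIntegral_congr_fun measurableSet_Ioc (fun s hs => ?_)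
    rw [hG s (hsub (Ioc_subset_Icc_self hs)), hF s (hsub (Ioc_subset_Icc_self hs))]
    simp only [intervalIntegral.integral_of_le hs.1.le]
    ring
  rw [e1]
  rw [integral_add (by exact (hfx'.mul_const _).add J1) (by exact (hgx'.const_mul _).add J2),
    integral_add (hfx'.mul_const _) J1, integral_add (hgx'.const_mul _) J2,
    integral_mul_const, integral_const_mul]
  linear_combination triangle_fubini f g x hfx' hgx'

lemma cexp_tsum (z : ℂ) : Complex.exp z = ∑' n : ℕ, z ^ n / n.factorial := by
  rw [Complex.exp_eq_exp_ℂ, NormedSpace.exp_eq_tsum_div]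

/-- The exponential of a primitive is an indefinite integral of its "derivative". -/
lemma exp_primitive (S : ℝ → ℂ) (c : ℂ) (X : ℝ) (hX : 0 ≤ X)
    (hS : IntervalIntegrable S volume 0 X) :
    ∀ x ∈ Icc (0:ℝ) X,
      Complex.exp (c * ∫ t in (0:ℝ)..x, S t)
        = 1 + ∫ τ in (0:ℝ)..x, (c * S τ * Complex.exp (c * ∫ t in (0:ℝ)..τ, S t)) := by
  set s : ℝ → ℂ := fun y => ∫ t in (0:ℝ)..y, S t with hsdef
  have hs0 : s 0 = 0 := intervalIntegral.integral_same
  have hcS : IntervalIntegrable (fun τ => c * S τ) volume 0 X := hS.const_mul c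
  set P : ℕ → ℝ → ℂ := fun n y => (c * s y) ^ n / n.factorial with hPdef
  have hP0 : ∀ n, P (n + 1) 0 = 0 := by
    intro n; simp [hPdef, hs0]
  -- main induction
  have key : ∀ n : ℕ,
      IntervalIntegrable (fun τ => c * S τ * P n τ) volume 0 X ∧
      ∀ x ∈ Icc (0:ℝ) X, P (n + 1) x = ∫ τ in (0:ℝ)..x, (c * S τ * P n τ) := by
    intro n
    induction n with
    | zero =>
      constructor
      · simpa [hPdef] using hcS
      · intro x hx
        simp only [hPdef]
        rw [intervalIntegral.integral_congr (g := fun τ => c * S τ) (by intro τ _; simp),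
          intervalIntegral.integral_const_mul]
        simp [hsdef]
    | succ n ih =>
      obtain ⟨ih1, ih2⟩ := ih
      have hF : ∀ x ∈ Icc (0:ℝ) X, (fun y => c * s y) x
          = (fun y => c * s y) 0 + ∫ τ in (0:ℝ)..x, (c * S τ) := by
        intro x hx
        simp only [hs0, mul_zero, zero_add, intervalIntegral.integral_const_mul]
        rfl
      have hG : ∀ x ∈ Icc (0:ℝ) X, P (n + 1) x
          = P (n + 1) 0 + ∫ τ in (0:ℝ)..x, (c * S τ * P n τ) := by
        intro x hx; rw [hP0, zero_add]; exact ih2 x hx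
      obtain ⟨hint, heq⟩ := ftc_mul (fun τ => c * S τ) (fun τ => c * S τ * P n τ)
        (fun y => c * s y) (P (n + 1)) X hX hcS ih1 hF hG
      have hne : ((n : ℂ) + 2) ≠ 0 := by
        have h4 : ((n : ℂ) + 2) = ((n + 2 : ℕ) : ℂ) := by push_cast; ring
        rw [h4]
        exact_mod_cast Nat.succ_ne_zero (n + 1)
      -- pointwise algebraic identity
      have hpt : ∀ τ, c * S τ * P (n + 1) τ + (c * s τ) * (c * S τ * P n τ)
          = ((n : ℂ) + 2) * (c * S τ * P (n + 1) τ) := by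
        intro τ
        simp only [hPdef]
        have h1 : ((n + 1).factorial : ℂ) = ((n : ℂ) + 1) * (n.factorial : ℂ) := by
          push_cast [Nat.factorial_succ]; ring
        have h2 : ((n.factorial : ℂ)) ≠ 0 := Nat.cast_ne_zero.2 (Nat.factorial_ne_zero n)
        have h3 : ((n : ℂ) + 1) ≠ 0 := by
          have h4 : ((n : ℂ) + 1) = ((n + 1 : ℕ) : ℂ) := by push_cast; ring
          rw [h4]
          exact_mod_cast Nat.succ_ne_zero n
        rw [h1]
        field_simp
        ring
      constructor
      · rw [intervalIntegrable_iff_integrableOn_Ioc_of_le hX] at hint ⊢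
        refine MeasureTheory.IntegrableOn.congr_fun (hint.const_mul (((n : ℂ) + 2)⁻¹))
          (fun τ _ => ?_) measurableSet_Ioc
        rw [hpt τ, inv_mul_cancel_left₀ hne]
      · intro x hx
        have hPP : P (n + 1 + 1) x = ((n : ℂ) + 2)⁻¹ * ((c * s x) * P (n + 1) x) := by
          simp only [hPdef]
          have h1 : ((n + 1 + 1).factorial : ℂ) = ((n : ℂ) + 2) * ((n + 1).factorial : ℂ) := by
            push_cast [Nat.factorial_succ]; ring
          have h2 : (((n + 1).factorial : ℂ)) ≠ 0 := Nat.cast_ne_zero.2 (Nat.factorial_ne_zero _)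
          rw [h1]
          field_simp
          ring
        have hbig : ∫ τ in (0:ℝ)..x, (c * S τ * P (n + 1) τ + (c * s τ) * (c * S τ * P n τ))
            = ((n : ℂ) + 2) * ∫ τ in (0:ℝ)..x, (c * S τ * P (n + 1) τ) := by
          rw [intervalIntegral.integral_congr
            (g := fun τ => ((n : ℂ) + 2) * (c * S τ * P (n + 1) τ)) (fun τ _ => hpt τ),
            intervalIntegral.integral_const_mul]
        have h5 := heq x hx
        simp only [hs0, mul_zero, hP0, zero_mul, zero_add] at h5
        rw [hPP, h5, hbig, inv_mul_cancel_left₀ hne]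
  -- summation
  intro x hx
  have hx0 : (0:ℝ) ≤ x := hx.1
  have hscont : ContinuousOn s (Icc 0 X) := by
    have := intervalIntegral.continuousOn_primitive_interval' hS
      (by rw [uIcc_of_le hX]; exact ⟨le_refl 0, hX⟩)
    rwa [uIcc_of_le hX] at this
  have hsub : uIcc (0:ℝ) x ⊆ uIcc 0 X := by
    rw [uIcc_of_le hX, uIcc_of_le hx0]; exact Icc_subset_Icc le_rfl hx.2
  obtain ⟨M, hM⟩ := (isCompact_Icc (a := (0:ℝ)) (b := X)).exists_bound_of_continuousOn
    (continuousOn_const (c := c).mul hscont)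
  set Fn : ℕ → ℝ → ℂ := fun n τ => c * S τ * P n τ with hFndef
  have hFint : ∀ n, Integrable (Fn n) (volume.restrict (Ioc 0 x)) := by
    intro n
    have h2 : IntervalIntegrable (Fn n) volume 0 x := ((key n).1).mono_set hsub
    exact (intervalIntegrable_iff_integrableOn_Ioc_of_le hx0).1 h2
  have hcSint : IntegrableOn (fun τ => ‖c * S τ‖) (Ioc 0 x) := by
    have h2 : IntervalIntegrable (fun τ => c * S τ) volume 0 x := hcS.mono_set hsub
    exact ((intervalIntegrable_iff_integrableOn_Ioc_of_le hx0).1 h2).norm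
  have hbound : ∀ n, (∫ τ in Ioc (0:ℝ) x, ‖Fn n τ‖)
      ≤ (∫ τ in Ioc (0:ℝ) x, ‖c * S τ‖) * (M ^ n / n.factorial) := by
    intro n
    rw [← integral_mul_const]
    refine setIntegral_mono_on ((hFint n).norm) (hcSint.mul_const _) measurableSet_Ioc
      (fun τ hτ => ?_)
    have hτ' : τ ∈ Icc (0:ℝ) X := ⟨hτ.1.le, hτ.2.trans hx.2⟩
    have h1 : ‖Fn n τ‖ = ‖c * S τ‖ * (‖c * s τ‖ ^ n / n.factorial) := by
      simp [hFndef, hPdef, norm_mul, norm_div, norm_pow, mul_div_assoc]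
    rw [h1]
    refine mul_le_mul_of_nonneg_left ?_ (norm_nonneg _)
    have hfac : (0:ℝ) < n.factorial := by positivity
    rw [div_le_div_iff_of_pos_right hfac]
    exact pow_le_pow_left₀ (norm_nonneg _) (hM τ hτ') n
  have hFsum : Summable fun n => ∫ τ in Ioc (0:ℝ) x, ‖Fn n τ‖ := by
    refine Summable.of_nonneg_of_le (fun n => integral_nonneg (fun τ => norm_nonneg _))
      hbound ?_
    exact (Real.summable_pow_div_factorial M).mul_left _
  have hsum1 := MeasureTheory.hasSum_integral_of_summable_integral_norm hFint hFsum
  have hptsum : ∀ τ, (∑' n, Fn n τ) = c * S τ * Complex.exp (c * s τ) := by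
    intro τ
    rw [hFndef]
    simp only
    rw [tsum_mul_left, cexp_tsum (c * s τ)]
  have hPsummable : Summable (fun n => P n x) := by
    have := NormedSpace.expSeries_div_summable (c * s x)
    simpa [hPdef] using this
  have hterm : ∀ n : ℕ, P (n + 1) x = ∫ τ in Ioc (0:ℝ) x, Fn n τ := by
    intro n
    rw [(key n).2 x hx, intervalIntegral.integral_of_le hx0]
  calc Complex.exp (c * s x) = ∑' n, P n x := by rw [cexp_tsum (c * s x)]
    _ = P 0 x + ∑' n, P (n + 1) x := hPsummable.tsum_eq_zero_add
    _ = 1 + ∑' n, ∫ τ in Ioc (0:ℝ) x, Fn n τ := by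
        have hP0x : P 0 x = 1 := by simp [hPdef]
        rw [hP0x]
        congr 1
        exact tsum_congr hterm
    _ = 1 + ∫ τ in Ioc (0:ℝ) x, (∑' n, Fn n τ) := by rw [hsum1.tsum_eq]
    _ = 1 + ∫ τ in (0:ℝ)..x, (c * S τ * Complex.exp (c * ∫ t in (0:ℝ)..τ, S t)) := by
        rw [intervalIntegral.integral_of_le hx0]
        congr 1
        refine setIntegral_congr_fun measurableSet_Ioc (fun τ _ => ?_)
        rw [hptsum τ]


/-- The gauge transform `ũ₁ = e^{−is₁}u₁`, `ũ₂ = e^{is₂}u₂` (with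
`s₁ = ∫S₁₁`, `s₂ = ∫S₂₂`) of an absolutely continuous pair `(u₁,u₂)` is absolutely
continuous; it transforms the Dirac system with full matrix potential `S` into the one
with off-diagonal potential `v₁₂ = S₁₂e^{−i(s₁+s₂)}`, `v₂₁ = S₂₁e^{i(s₁+s₂)}` (claim (i)),
and transforms the boundary conditions `(a,b,c,d)` into `(ã,b̃,c̃,d̃)` with `ã = a`,
`b̃ = b·e^{is₁(π)}`, `c̃ = c·e^{is₂(π)}`, `d̃ = d·e^{i(s₁(π)+s₂(π))}` (claim (ii)). -/
theorem stmt17 (S11 S12 S21 S22 : ℝ → ℂ)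
    (hS11 : MemLp S11 2 (volume.restrict (Set.Icc 0 Real.pi)))
    (hS12 : MemLp S12 2 (volume.restrict (Set.Icc 0 Real.pi)))
    (hS21 : MemLp S21 2 (volume.restrict (Set.Icc 0 Real.pi)))
    (hS22 : MemLp S22 2 (volume.restrict (Set.Icc 0 Real.pi)))
    (u₁ u₂ u₁' u₂' : ℝ → ℂ)
    (hu₁' : IntervalIntegrable u₁' volume 0 Real.pi)
    (hu₂' : IntervalIntegrable u₂' volume 0 Real.pi)
    (hu₁ : ∀ x ∈ Set.Icc (0 : ℝ) Real.pi, u₁ x = u₁ 0 + ∫ τ in (0 : ℝ)..x, u₁' τ)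
    (hu₂ : ∀ x ∈ Set.Icc (0 : ℝ) Real.pi, u₂ x = u₂ 0 + ∫ τ in (0 : ℝ)..x, u₂' τ)
    (tu₁ tu₂ : ℝ → ℂ)
    (htu₁ : ∀ t, tu₁ t = Complex.exp (-Complex.I * gaugeInt S11 t) * u₁ t)
    (htu₂ : ∀ t, tu₂ t = Complex.exp (Complex.I * gaugeInt S22 t) * u₂ t) :
    -- `ũ₁, ũ₂` are absolutely continuous, with derivatives `w₁, w₂`, and (i) holds:
    (∃ w₁ w₂ : ℝ → ℂ,
      IntervalIntegrable w₁ volume 0 Real.pi ∧ IntervalIntegrable w₂ volume 0 Real.pi ∧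
      (∀ x ∈ Set.Icc (0 : ℝ) Real.pi, tu₁ x = tu₁ 0 + ∫ τ in (0 : ℝ)..x, w₁ τ) ∧
      (∀ x ∈ Set.Icc (0 : ℝ) Real.pi, tu₂ x = tu₂ 0 + ∫ τ in (0 : ℝ)..x, w₂ τ) ∧
      (∀ᵐ t ∂(volume.restrict (Set.Icc (0 : ℝ) Real.pi)),
        Complex.I * w₁ t +
            S12 t * Complex.exp (-Complex.I * (gaugeInt S11 t + gaugeInt S22 t)) * tu₂ t =
          Complex.exp (-Complex.I * gaugeInt S11 t) *
            (Complex.I * u₁' t + S11 t * u₁ t + S12 t * u₂ t)) ∧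
      (∀ᵐ t ∂(volume.restrict (Set.Icc (0 : ℝ) Real.pi)),
        -Complex.I * w₂ t +
            S21 t * Complex.exp (Complex.I * (gaugeInt S11 t + gaugeInt S22 t)) * tu₁ t =
          Complex.exp (Complex.I * gaugeInt S22 t) *
            (-Complex.I * u₂' t + S21 t * u₁ t + S22 t * u₂ t))) ∧
    -- (ii): equivalence of boundary conditions
    (∀ a b c d : ℂ,
      (u₁ 0 + b * u₁ Real.pi + a * u₂ 0 = 0 ∧
        d * u₁ Real.pi + c * u₂ 0 + u₂ Real.pi = 0) ↔
      (tu₁ 0 + (b * Complex.exp (Complex.I * gaugeInt S11 Real.pi)) * tu₁ Real.pi +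
          a * tu₂ 0 = 0 ∧
        (d * Complex.exp (Complex.I * (gaugeInt S11 Real.pi + gaugeInt S22 Real.pi))) *
            tu₁ Real.pi +
          (c * Complex.exp (Complex.I * gaugeInt S22 Real.pi)) * tu₂ 0 + tu₂ Real.pi = 0)) := by
  have hpi : (0:ℝ) ≤ Real.pi := Real.pi_pos.le
  have huI : uIcc (0:ℝ) Real.pi = Icc 0 Real.pi := uIcc_of_le hpi
  -- integrability of the entries
  have hint : ∀ S : ℝ → ℂ, MemLp S 2 (volume.restrict (Set.Icc 0 Real.pi)) →
      IntervalIntegrable S volume 0 Real.pi := by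
    intro S h
    have h1 : Integrable S (volume.restrict (Icc (0:ℝ) Real.pi)) :=
      h.integrable (by norm_num)
    rw [intervalIntegrable_iff_integrableOn_Ioc_of_le hpi]
    exact MeasureTheory.IntegrableOn.mono_set h1 Ioc_subset_Icc_self
  have h11 := hint S11 hS11
  have h22 := hint S22 hS22
  -- gauge factors
  set E1 : ℝ → ℂ := fun t => Complex.exp (-Complex.I * gaugeInt S11 t) with hE1def
  set E2 : ℝ → ℂ := fun t => Complex.exp (Complex.I * gaugeInt S22 t) with hE2def
  have hg0 : ∀ S : ℝ → ℂ, gaugeInt S 0 = 0 := fun S => intervalIntegral.integral_same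
  have hE10 : E1 0 = 1 := by simp [hE1def, hg0]
  have hE20 : E2 0 = 1 := by simp [hE2def, hg0]
  -- continuity of gauge factors
  have hcontE : ∀ (S : ℝ → ℂ) (c : ℂ), IntervalIntegrable S volume 0 Real.pi →
      ContinuousOn (fun t => Complex.exp (c * gaugeInt S t)) (Icc 0 Real.pi) := by
    intro S c h
    have hs : ContinuousOn (fun t => gaugeInt S t) (Icc 0 Real.pi) := by
      have := intervalIntegral.continuousOn_primitive_interval' h
        (by rw [huI]; exact ⟨le_refl 0, hpi⟩)
      rwa [huI] at this
    exact Complex.continuous_exp.comp_continuousOn (continuousOn_const.mul hs)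
  have hE1cont : ContinuousOn E1 (Icc 0 Real.pi) := hcontE S11 (-Complex.I) h11
  have hE2cont : ContinuousOn E2 (Icc 0 Real.pi) := hcontE S22 Complex.I h22
  -- the gauge factors are indefinite integrals
  set f1 : ℝ → ℂ := fun τ => -Complex.I * S11 τ * E1 τ with hf1def
  set f2 : ℝ → ℂ := fun τ => Complex.I * S22 τ * E2 τ with hf2def
  have hE1eq : ∀ x ∈ Icc (0:ℝ) Real.pi, E1 x = E1 0 + ∫ τ in (0:ℝ)..x, f1 τ := by
    intro x hx
    have := exp_primitive S11 (-Complex.I) Real.pi hpi h11 x hx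
    rw [hE10]
    simpa [hE1def, hf1def, gaugeInt] using this
  have hE2eq : ∀ x ∈ Icc (0:ℝ) Real.pi, E2 x = E2 0 + ∫ τ in (0:ℝ)..x, f2 τ := by
    intro x hx
    have := exp_primitive S22 Complex.I Real.pi hpi h22 x hx
    rw [hE20]
    simpa [hE2def, hf2def, gaugeInt] using this
  have hf1int : IntervalIntegrable f1 volume 0 Real.pi := by
    have := ((h11.const_mul (-Complex.I)).mul_continuousOn (by rw [huI]; exact hE1cont))
    exact this
  have hf2int : IntervalIntegrable f2 volume 0 Real.pi := by
    exact ((h22.const_mul Complex.I).mul_continuousOn (by rw [huI]; exact hE2cont))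
  -- product rule
  obtain ⟨hw₁int, hw₁⟩ := ftc_mul f1 u₁' E1 u₁ Real.pi hpi hf1int hu₁' hE1eq hu₁
  obtain ⟨hw₂int, hw₂⟩ := ftc_mul f2 u₂' E2 u₂ Real.pi hpi hf2int hu₂' hE2eq hu₂
  constructor
  · refine ⟨fun τ => f1 τ * u₁ τ + E1 τ * u₁' τ, fun τ => f2 τ * u₂ τ + E2 τ * u₂' τ,
      hw₁int, hw₂int, ?_, ?_, ?_, ?_⟩
    · intro x hx
      rw [htu₁ x, htu₁ 0]
      simp only [hg0, mul_zero, Complex.exp_zero, one_mul]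
      have := hw₁ x hx
      rw [hE10, one_mul] at this
      exact this
    · intro x hx
      rw [htu₂ x, htu₂ 0]
      simp only [hg0, mul_zero, Complex.exp_zero, one_mul]
      have := hw₂ x hx
      rw [hE20, one_mul] at this
      exact this
    · refine Filter.Eventually.of_forall (fun t => ?_)
      rw [htu₂ t]
      have hexp : Complex.exp (-Complex.I * (gaugeInt S11 t + gaugeInt S22 t)) *
          Complex.exp (Complex.I * gaugeInt S22 t)
          = Complex.exp (-Complex.I * gaugeInt S11 t) := by
        rw [← Complex.exp_add]; congr 1; ring
      simp only [hf1def, hE1def]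
      linear_combination (S12 t * u₂ t) * hexp
        - (S11 t * Complex.exp (-Complex.I * gaugeInt S11 t) * u₁ t) * Complex.I_mul_I
    · refine Filter.Eventually.of_forall (fun t => ?_)
      rw [htu₁ t]
      have hexp : Complex.exp (Complex.I * (gaugeInt S11 t + gaugeInt S22 t)) *
          Complex.exp (-Complex.I * gaugeInt S11 t)
          = Complex.exp (Complex.I * gaugeInt S22 t) := by
        rw [← Complex.exp_add]; congr 1; ring
      simp only [hf2def, hE2def]
      linear_combination (S21 t * u₁ t) * hexp
        - (S22 t * Complex.exp (Complex.I * gaugeInt S22 t) * u₂ t) * Complex.I_mul_I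
  · intro a b c d
    have hEA : Complex.exp (Complex.I * gaugeInt S11 Real.pi) *
        Complex.exp (-Complex.I * gaugeInt S11 Real.pi) = 1 := by
      rw [← Complex.exp_add]
      have h0 : Complex.I * gaugeInt S11 Real.pi + -Complex.I * gaugeInt S11 Real.pi = 0 := by
        ring
      rw [h0, Complex.exp_zero]
    have hEAB : Complex.exp (Complex.I * (gaugeInt S11 Real.pi + gaugeInt S22 Real.pi)) *
        Complex.exp (-Complex.I * gaugeInt S11 Real.pi)
        = Complex.exp (Complex.I * gaugeInt S22 Real.pi) := by
      rw [← Complex.exp_add]; congr 1; ring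
    have e1 : tu₁ 0 + (b * Complex.exp (Complex.I * gaugeInt S11 Real.pi)) * tu₁ Real.pi +
          a * tu₂ 0
        = u₁ 0 + b * u₁ Real.pi + a * u₂ 0 := by
      rw [htu₁ 0, htu₁ Real.pi, htu₂ 0]
      simp only [hg0, mul_zero, Complex.exp_zero, one_mul]
      linear_combination (b * u₁ Real.pi) * hEA
    have e2 : (d * Complex.exp (Complex.I * (gaugeInt S11 Real.pi + gaugeInt S22 Real.pi))) *
            tu₁ Real.pi +
          (c * Complex.exp (Complex.I * gaugeInt S22 Real.pi)) * tu₂ 0 + tu₂ Real.pi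
        = Complex.exp (Complex.I * gaugeInt S22 Real.pi) *
            (d * u₁ Real.pi + c * u₂ 0 + u₂ Real.pi) := by
      rw [htu₁ Real.pi, htu₂ 0, htu₂ Real.pi]
      simp only [hg0, mul_zero, Complex.exp_zero, one_mul]
      linear_combination (d * u₁ Real.pi) * hEAB
    rw [e1, e2, mul_eq_zero]
    simp [Complex.exp_ne_zero]
end
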